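/- arXiv:math/0503171 — 7 statements merged into one kernel-verified Lean document; each statement's English description precedes it below -/
import Mathlib

section
/- For every b ≥ 0 and every y ≥ 0, the integral ∫₀^y (1 + log((1+y)/(1+x)))^b dx is at most C(b)·y, where C(b) is a constant depending only on b. -/
open MeasureTheory

theorem stmt0 (b : ℝ) (hb : 0 ≤ b) :
    ∃ C : ℝ, 0 < C ∧ ∀ y : ℝ, 0 ≤ y →
      (∫ x in (0:ℝ)..y, (1 + Real.log ((1 + y) / (1 + x))) ^ b) ≤ C * y := by
  set M := Real.exp (1/2 + b * Real.log (2*b+2)) with hM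
  have hMpos : 0 < M := Real.exp_pos _
  refine ⟨2*M, by positivity, ?_⟩
  intro y hy
  -- key pointwise bound
  have key : ∀ t : ℝ, 1 ≤ t → (1 + Real.log t) ^ b ≤ M * t ^ ((1:ℝ)/2) := by
    intro t ht
    have htpos : (0:ℝ) < t := by linarith
    have hlt : 0 ≤ Real.log t := Real.log_nonneg ht
    have h1 : 0 < 1 + Real.log t := by linarith
    have ha : (0:ℝ) < 2*b+2 := by linarith
    have hdiv : 0 < (1 + Real.log t)/(2*b+2) := by positivity
    have h2 := Real.log_le_sub_one_of_pos hdiv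
    rw [Real.log_div (ne_of_gt h1) (ne_of_gt ha)] at h2
    -- h2 : log(1+u) - log(2b+2) ≤ (1+u)/(2b+2) - 1
    have h3 : b * Real.log (1 + Real.log t) ≤ 1/2 + b * Real.log (2*b+2) + (1/2) * Real.log t := by
      have h4 : b * ((1 + Real.log t)/(2*b+2)) ≤ (1 + Real.log t)/2 := by
        rw [mul_div_assoc', div_le_div_iff₀ ha (by norm_num : (0:ℝ) < 2)]
        nlinarith
      nlinarith [mul_le_mul_of_nonneg_left h2 hb]
    calc (1 + Real.log t) ^ b = Real.exp (Real.log (1 + Real.log t) * b) :=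
          Real.rpow_def_of_pos h1 b
      _ ≤ Real.exp (1/2 + b * Real.log (2*b+2) + (1/2) * Real.log t) := by
          apply Real.exp_le_exp.mpr; linarith [h3]
      _ = M * t ^ ((1:ℝ)/2) := by
          rw [Real.exp_add, hM, Real.rpow_def_of_pos htpos]
          ring_nf
  -- continuity / integrability
  have hbase : ∀ x ∈ Set.Icc (0:ℝ) y, (1:ℝ) ≤ (1 + y) / (1 + x) := by
    intro x hx
    rw [le_div_iff₀ (by linarith [hx.1] : (0:ℝ) < 1 + x)]
    linarith [hx.2]
  have hcontf : ContinuousOn (fun x : ℝ => (1 + Real.log ((1 + y) / (1 + x))) ^ b)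
      (Set.Icc 0 y) := by
    apply ContinuousOn.rpow_const
    · apply ContinuousOn.add continuousOn_const
      apply ContinuousOn.log
      · exact ContinuousOn.div continuousOn_const
          (by fun_prop) (fun x hx => by nlinarith [hx.1])
      · intro x hx
        have := hbase x hx
        linarith
    · exact fun x hx => Or.inr hb
  have hintf : IntervalIntegrable (fun x : ℝ => (1 + Real.log ((1 + y) / (1 + x))) ^ b)
      volume 0 y := by
    apply ContinuousOn.intervalIntegrable
    rwa [Set.uIcc_of_le hy]
  have hcontg : ContinuousOn (fun x : ℝ => M * (1+y) ^ ((1:ℝ)/2) * (1 + x) ^ (-(1:ℝ)/2))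
      (Set.Icc 0 y) := by
    apply ContinuousOn.mul continuousOn_const
    apply ContinuousOn.rpow_const
    · fun_prop
    · intro x hx
      left; nlinarith [hx.1]
  have hintg : IntervalIntegrable (fun x : ℝ => M * (1+y) ^ ((1:ℝ)/2) * (1 + x) ^ (-(1:ℝ)/2))
      volume 0 y := by
    apply ContinuousOn.intervalIntegrable
    rwa [Set.uIcc_of_le hy]
  have hmono : (∫ x in (0:ℝ)..y, (1 + Real.log ((1 + y) / (1 + x))) ^ b)
      ≤ ∫ x in (0:ℝ)..y, M * (1+y) ^ ((1:ℝ)/2) * (1 + x) ^ (-(1:ℝ)/2) := by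
    apply intervalIntegral.integral_mono_on hy hintf hintg
    intro x hx
    have h1x : (0:ℝ) < 1 + x := by linarith [hx.1]
    have h1y : (0:ℝ) < 1 + y := by linarith
    calc (1 + Real.log ((1 + y) / (1 + x))) ^ b
        ≤ M * ((1+y)/(1+x)) ^ ((1:ℝ)/2) := key _ (hbase x hx)
      _ = M * (1+y) ^ ((1:ℝ)/2) * (1 + x) ^ (-(1:ℝ)/2) := by
          rw [Real.div_rpow (by linarith) (by linarith), div_eq_mul_inv,
            ← Real.rpow_neg (by linarith : (0:ℝ) ≤ 1 + x)]
          ring_nf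
  -- compute the right integral
  have hcomp : (∫ x in (0:ℝ)..y, (1 + x) ^ (-(1:ℝ)/2))
      = 2 * ((1+y) ^ ((1:ℝ)/2) - 1) := by
    have h1 : (∫ x in (0:ℝ)..y, (1 + x) ^ (-(1:ℝ)/2))
        = ∫ x in (1:ℝ)..(1+y), x ^ (-(1:ℝ)/2) := by
      simpa using intervalIntegral.integral_comp_add_left (a := 0) (b := y)
        (fun x => x ^ (-(1:ℝ)/2)) 1
    rw [h1, integral_rpow (Or.inl (by norm_num : (-1:ℝ) < -1/2))]
    norm_num
    ring
  have hsq : (1+y) ^ ((1:ℝ)/2) * (1+y) ^ ((1:ℝ)/2) = 1 + y := by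
    rw [← Real.rpow_add (by linarith : (0:ℝ) < 1 + y)]
    norm_num
  have hs1 : (1:ℝ) ≤ (1+y) ^ ((1:ℝ)/2) :=
    Real.one_le_rpow (by linarith) (by norm_num)
  calc (∫ x in (0:ℝ)..y, (1 + Real.log ((1 + y) / (1 + x))) ^ b)
      ≤ ∫ x in (0:ℝ)..y, M * (1+y) ^ ((1:ℝ)/2) * (1 + x) ^ (-(1:ℝ)/2) := hmono
    _ = M * (1+y) ^ ((1:ℝ)/2) * (2 * ((1+y) ^ ((1:ℝ)/2) - 1)) := by
        rw [intervalIntegral.integral_const_mul, hcomp]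
    _ ≤ 2 * M * y := by nlinarith [hMpos.le]
end

section
/- Let κ > 2, 0 ≤ ν < 1, and b ≥ 0. Then there is a constant C = C(κ, ν, b) such that for all y ≥ 0, ∫_{-y}^{y} (1+|x+y|)^{1-κ} · (1+|x|)^{-ν} · (1 + log((1+y)/(1+|x|)))^b dx ≤ C·(1+y)^{-ν}. -/
open MeasureTheory intervalIntegral

set_option maxHeartbeats 1000000

lemma int_one_add_rpow (r T : ℝ) (hr : r ≠ -1) (hT : 0 ≤ T) :
    ∫ x in (0:ℝ)..T, (1+x) ^ r = ((1+T) ^ (r+1) - 1) / (r+1) := by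
  have h := intervalIntegral.integral_comp_add_left (a := (0:ℝ)) (b := T)
      (fun x => x ^ r) 1
  simp only [add_zero] at h
  rw [h, integral_rpow, Real.one_rpow]
  right
  refine ⟨hr, fun hmem => ?_⟩
  rw [Set.mem_uIcc] at hmem
  rcases hmem with ⟨h1, h2⟩ | ⟨h1, h2⟩ <;> linarith

lemma log_rpow_bound (c b : ℝ) (hc : 0 < c) (hb : 0 ≤ b) (t : ℝ) (ht : 1 ≤ t) :
    (1 + Real.log t) ^ b ≤ (1 + (b+1)/c) ^ b * t ^ c := by
  have ht0 : (0:ℝ) < t := by linarith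
  have hb1 : (0:ℝ) < b + 1 := by linarith
  set e : ℝ := c / (b+1) with he
  have hepos : 0 < e := div_pos hc hb1
  have heA : e * Real.log t ≤ t ^ e - 1 := by
    have h2 : Real.log (t ^ e) ≤ t ^ e - 1 :=
      Real.log_le_sub_one_of_pos (Real.rpow_pos_of_pos ht0 e)
    rwa [Real.log_rpow ht0 e] at h2
  have h3 : (1:ℝ) ≤ t ^ e := Real.one_le_rpow ht hepos.le
  have hinv : 1 / e = (b+1)/c := by rw [he, one_div_div]
  have step1 : 1 + Real.log t ≤ (1 + (b+1)/c) * t ^ e := by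
    rw [← hinv]
    nlinarith [heA, h3, hepos, mul_one_div_cancel (ne_of_gt hepos),
      mul_le_mul_of_nonneg_left h3 hepos.le]
  have hnn : 0 ≤ 1 + Real.log t := by
    have := Real.log_nonneg ht; linarith
  have step2 : (1 + Real.log t) ^ b ≤ ((1 + (b+1)/c) * t ^ e) ^ b :=
    Real.rpow_le_rpow hnn step1 hb
  have hcpos : (0:ℝ) < 1 + (b+1)/c := by positivity
  have expand : ((1 + (b+1)/c) * t ^ e) ^ b = (1 + (b+1)/c) ^ b * t ^ (e * b) := by
    rw [Real.mul_rpow hcpos.le (Real.rpow_pos_of_pos ht0 e).le, ← Real.rpow_mul ht0.le]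
  have hfin : t ^ (e * b) ≤ t ^ c := by
    apply Real.rpow_le_rpow_of_exponent_le ht
    rw [he, div_mul_eq_mul_div, div_le_iff₀ hb1]
    nlinarith [hc]
  calc (1 + Real.log t) ^ b ≤ (1 + (b+1)/c) ^ b * t ^ (e * b) := by rw [← expand]; exact step2
    _ ≤ (1 + (b+1)/c) ^ b * t ^ c := by
        apply mul_le_mul_of_nonneg_left hfin (Real.rpow_pos_of_pos hcpos b).le

theorem stmt1 (κ ν b : ℝ) (hκ : 2 < κ) (hν0 : 0 ≤ ν) (hν1 : ν < 1) (hb : 0 ≤ b) :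
    ∃ C : ℝ, 0 < C ∧ ∀ y : ℝ, 0 ≤ y →
      (∫ x in (-y)..y,
          (1 + |x + y|) ^ (1 - κ) * (1 + |x|) ^ (-ν) *
            (1 + Real.log ((1 + y) / (1 + |x|))) ^ b) ≤ C * (1 + y) ^ (-ν) := by
  have hκ2 : (0:ℝ) < κ - 2 := by linarith
  have hν' : (0:ℝ) < 1 - ν := by linarith
  set D : ℝ := (1 + (b+1)/(κ-2)) ^ b with hD
  have hDpos : 0 < D := Real.rpow_pos_of_pos (by positivity) b
  have hlog2 : (0:ℝ) < Real.log 2 := Real.log_pos (by norm_num)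
  refine ⟨2 ^ ν * (1 + Real.log 2) ^ b / (κ - 2) + 2 ^ (κ-1) * D / (1 - ν) + D / (1 - ν),
    by positivity, ?_⟩
  intro y hy
  have h1y : (0:ℝ) < 1 + y := by linarith
  set F : ℝ → ℝ := fun x => (1 + |x + y|) ^ (1 - κ) * (1 + |x|) ^ (-ν) *
      (1 + Real.log ((1 + y) / (1 + |x|))) ^ b with hF
  -- continuity of F
  have hFc : Continuous F := by
    have c1 : Continuous fun x : ℝ => (1 + |x + y|) ^ (1 - κ) := by
      apply Continuous.rpow_const (by continuity)
      intro x; left; positivity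
    have c2 : Continuous fun x : ℝ => (1 + |x|) ^ (-ν) := by
      apply Continuous.rpow_const (by continuity)
      intro x; left; positivity
    have c3 : Continuous fun x : ℝ => (1 + Real.log ((1 + y) / (1 + |x|))) ^ b := by
      apply Continuous.rpow_const
      · apply Continuous.add continuous_const
        apply Continuous.log
        · exact continuous_const.div (by continuity) (fun x => by positivity)
        · intro x; positivity
      · intro x; right; exact hb
    exact (c1.mul c2).mul c3
  have hL1 : ∀ x : ℝ, |x| ≤ y → 0 ≤ Real.log ((1 + y) / (1 + |x|)) := by
    intro x hx
    apply Real.log_nonneg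
    rw [le_div_iff₀ (by positivity)]
    have := abs_nonneg x
    linarith
  have hlb : (1 + Real.log (1 + y)) ^ b ≤ D * (1 + y) ^ (κ - 2) := by
    rw [hD]
    exact log_rpow_bound (κ-2) b hκ2 hb (1+y) (by linarith)
  -- piece 1 : x ∈ [-y, -y/2]
  have piece1 : ∫ x in (-y)..(-y/2), F x ≤
      2 ^ ν * (1 + Real.log 2) ^ b / (κ - 2) * (1 + y) ^ (-ν) := by
    have hy2 : -y ≤ -y/2 := by linarith
    set g : ℝ → ℝ := fun x => (1 + (x + y)) ^ (1 - κ) * (2 ^ ν * (1 + y) ^ (-ν)) *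
        (1 + Real.log 2) ^ b with hg
    have hgc : ContinuousOn g (Set.uIcc (-y) (-y/2)) := by
      apply ContinuousOn.mul ?_ continuousOn_const
      apply ContinuousOn.mul ?_ continuousOn_const
      apply ContinuousOn.rpow_const (by fun_prop)
      intro x hx
      rw [Set.uIcc_of_le hy2] at hx
      have h1 := hx.1
      exact Or.inl (ne_of_gt (by linarith))
    have hmono : ∫ x in (-y)..(-y/2), F x ≤ ∫ x in (-y)..(-y/2), g x := by
      apply intervalIntegral.integral_mono_on hy2 (hFc.intervalIntegrable _ _)
        hgc.intervalIntegrable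
      intro x hx
      obtain ⟨hx1, hx2⟩ := hx
      have ha : |x + y| = x + y := abs_of_nonneg (by linarith)
      have hax : |x| = -x := abs_of_nonpos (by linarith)
      have hxle : |x| ≤ y := by rw [hax]; linarith
      have h0 : 0 ≤ 1 + Real.log ((1 + y) / (1 + |x|)) := by
        have := hL1 x hxle; linarith
      have hr2 : (1 + y) / (1 + |x|) ≤ 2 := by
        rw [div_le_iff₀ (by positivity), hax]; linarith
      have hf3 : (1 + Real.log ((1 + y) / (1 + |x|))) ^ b ≤ (1 + Real.log 2) ^ b := by
        apply Real.rpow_le_rpow h0 _ hb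
        have : Real.log ((1 + y) / (1 + |x|)) ≤ Real.log 2 :=
          Real.log_le_log (by positivity) hr2
        linarith
      have hf2 : (1 + |x|) ^ (-ν) ≤ 2 ^ ν * (1 + y) ^ (-ν) := by
        have hhalf : ((1 + y)/2) ^ (-ν) = 2 ^ ν * (1 + y) ^ (-ν) := by
          rw [Real.div_rpow h1y.le (by norm_num), Real.rpow_neg (by norm_num : (0:ℝ) ≤ 2),
            div_eq_mul_inv, inv_inv, mul_comm]
        rw [← hhalf]
        apply Real.rpow_le_rpow_of_nonpos (by linarith) _ (by linarith)
        rw [hax]; linarith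
      rw [hF, hg]
      simp only [ha]
      gcongr
      · exact mul_nonneg (Real.rpow_nonneg (by linarith) _) (by positivity)
      · exact Real.rpow_nonneg (by linarith) _
    have hInt : (∫ x in (-y)..(-y/2), (1 + (x + y)) ^ (1 - κ)) ≤ 1 / (κ - 2) := by
      have he : (∫ x in (-y)..(-y/2), (1 + (x + y)) ^ (1 - κ))
          = ∫ x in (0:ℝ)..(y/2), (1 + x) ^ (1 - κ) := by
        rw [intervalIntegral.integral_comp_add_right (fun x => (1 + x) ^ (1 - κ)) y]
        congr 1 <;> ring
      rw [he, int_one_add_rpow _ _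
        (by intro h; rw [sub_eq_iff_eq_add] at h; linarith) (by linarith)]
      have hA : (1 + y/2) ^ ((1 - κ) + 1) ≤ 1 :=
        Real.rpow_le_one_of_one_le_of_nonpos (by linarith) (by linarith)
      have hApos : 0 < (1 + y/2) ^ ((1 - κ) + 1) :=
        Real.rpow_pos_of_pos (by linarith) _
      have heq : ((1 + y/2) ^ ((1 - κ) + 1) - 1) / ((1 - κ) + 1)
          = (1 - (1 + y/2) ^ ((1 - κ) + 1)) / (κ - 2) := by
        rw [div_eq_div_iff (by linarith) (by linarith)]; ring
      rw [heq]
      gcongr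
      linarith
    calc ∫ x in (-y)..(-y/2), F x ≤ ∫ x in (-y)..(-y/2), g x := hmono
      _ = (∫ x in (-y)..(-y/2), (1 + (x + y)) ^ (1 - κ)) * (2 ^ ν * (1 + y) ^ (-ν)) *
          (1 + Real.log 2) ^ b := by
          rw [hg]
          rw [intervalIntegral.integral_mul_const, intervalIntegral.integral_mul_const]
      _ ≤ (1 / (κ - 2)) * (2 ^ ν * (1 + y) ^ (-ν)) * (1 + Real.log 2) ^ b := by
          gcongr
      _ = 2 ^ ν * (1 + Real.log 2) ^ b / (κ - 2) * (1 + y) ^ (-ν) := by ring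
  -- piece 2 : x ∈ [-y/2, 0]
  have piece2 : ∫ x in (-y/2)..(0:ℝ), F x ≤
      2 ^ (κ-1) * D / (1 - ν) * (1 + y) ^ (-ν) := by
    have hy2 : -y/2 ≤ (0:ℝ) := by linarith
    set g : ℝ → ℝ := fun x => (2 ^ (κ-1) * (1 + y) ^ (1-κ)) * (1 + (-x)) ^ (-ν) *
        (D * (1 + y) ^ (κ-2)) with hg
    have hgc : ContinuousOn g (Set.uIcc (-y/2) 0) := by
      apply ContinuousOn.mul ?_ continuousOn_const
      apply ContinuousOn.mul continuousOn_const
      apply ContinuousOn.rpow_const (by fun_prop)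
      intro x hx
      rw [Set.uIcc_of_le hy2] at hx
      have h2 := hx.2
      exact Or.inl (ne_of_gt (by linarith))
    have hhalf : ((1 + y)/2) ^ (1-κ) = 2 ^ (κ-1) * (1 + y) ^ (1-κ) := by
      have h2 : (2:ℝ) ^ ((1:ℝ)-κ) = (2 ^ (κ-1))⁻¹ := by
        rw [show (1:ℝ)-κ = -(κ-1) by ring, Real.rpow_neg (by norm_num)]
      rw [Real.div_rpow h1y.le (by norm_num), h2, div_eq_mul_inv, inv_inv, mul_comm]
    have hmono : ∫ x in (-y/2)..(0:ℝ), F x ≤ ∫ x in (-y/2)..(0:ℝ), g x := by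
      apply intervalIntegral.integral_mono_on hy2 (hFc.intervalIntegrable _ _)
        hgc.intervalIntegrable
      intro x hx
      obtain ⟨hx1, hx2⟩ := hx
      have ha : |x + y| = x + y := abs_of_nonneg (by linarith)
      have hax : |x| = -x := abs_of_nonpos hx2
      have hxle : |x| ≤ y := by rw [hax]; linarith
      have h0 := hL1 x hxle
      have hf1 : (1 + (x + y)) ^ (1-κ) ≤ 2 ^ (κ-1) * (1 + y) ^ (1-κ) := by
        rw [← hhalf]
        exact Real.rpow_le_rpow_of_nonpos (by linarith) (by linarith) (by linarith)
      have hf3 : (1 + Real.log ((1 + y) / (1 + |x|))) ^ b ≤ D * (1 + y) ^ (κ-2) := by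
        refine le_trans (Real.rpow_le_rpow (by linarith) ?_ hb) hlb
        have hr : (1 + y) / (1 + |x|) ≤ 1 + y := by
          rw [div_le_iff₀ (by positivity)]
          nlinarith [abs_nonneg x]
        have := Real.log_le_log (by positivity) hr
        linarith
      rw [hF, hg]
      simp only [ha, hax] at hf3 h0 ⊢
      gcongr
      · exact mul_nonneg (by positivity) (Real.rpow_nonneg (by linarith) _)
      · exact Real.rpow_nonneg (by linarith) _
    have hInt : (∫ x in (-y/2)..(0:ℝ), (1 + (-x)) ^ (-ν)) ≤ (1 + y) ^ (1-ν) / (1 - ν) := by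
      have he : (∫ x in (-y/2)..(0:ℝ), (1 + (-x)) ^ (-ν))
          = ∫ x in (0:ℝ)..(y/2), (1 + x) ^ (-ν) := by
        rw [intervalIntegral.integral_comp_neg (fun x => (1 + x) ^ (-ν))]
        congr 1 <;> ring
      rw [he, int_one_add_rpow _ _ (fun h => by have := neg_injective h; linarith)
        (by linarith), show -ν + 1 = 1 - ν by ring]
      have hA : (1 + y/2) ^ (1-ν) ≤ (1 + y) ^ (1-ν) :=
        Real.rpow_le_rpow (by linarith) (by linarith) (by linarith)
      gcongr
      linarith
    have hpow : (1+y) ^ (1-κ) * (1+y) ^ (1-ν) * (1+y) ^ (κ-2) = (1+y) ^ (-ν) := by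
      rw [← Real.rpow_add h1y, ← Real.rpow_add h1y]
      congr 1; ring
    calc ∫ x in (-y/2)..(0:ℝ), F x ≤ ∫ x in (-y/2)..(0:ℝ), g x := hmono
      _ = (2 ^ (κ-1) * (1 + y) ^ (1-κ)) * (∫ x in (-y/2)..(0:ℝ), (1 + (-x)) ^ (-ν)) *
          (D * (1 + y) ^ (κ-2)) := by
          rw [hg, intervalIntegral.integral_mul_const, intervalIntegral.integral_const_mul]
      _ ≤ (2 ^ (κ-1) * (1 + y) ^ (1-κ)) * ((1 + y) ^ (1-ν) / (1 - ν)) *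
          (D * (1 + y) ^ (κ-2)) := by
          gcongr
      _ = 2 ^ (κ-1) * D / (1 - ν) * ((1+y) ^ (1-κ) * (1+y) ^ (1-ν) * (1+y) ^ (κ-2)) := by
          ring
      _ = 2 ^ (κ-1) * D / (1 - ν) * (1 + y) ^ (-ν) := by rw [hpow]
  -- piece 3 : x ∈ [0, y]
  have piece3 : ∫ x in (0:ℝ)..y, F x ≤ D / (1 - ν) * (1 + y) ^ (-ν) := by
    set g : ℝ → ℝ := fun x => (1 + y) ^ (1-κ) * (1 + x) ^ (-ν) *
        (D * (1 + y) ^ (κ-2)) with hg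
    have hgc : ContinuousOn g (Set.uIcc (0:ℝ) y) := by
      apply ContinuousOn.mul ?_ continuousOn_const
      apply ContinuousOn.mul continuousOn_const
      apply ContinuousOn.rpow_const (by fun_prop)
      intro x hx
      rw [Set.uIcc_of_le hy] at hx
      have h1 := hx.1
      exact Or.inl (ne_of_gt (by linarith))
    have hmono : ∫ x in (0:ℝ)..y, F x ≤ ∫ x in (0:ℝ)..y, g x := by
      apply intervalIntegral.integral_mono_on hy (hFc.intervalIntegrable _ _)
        hgc.intervalIntegrable
      intro x hx
      obtain ⟨hx1, hx2⟩ := hx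
      have ha : |x + y| = x + y := abs_of_nonneg (by linarith)
      have hax : |x| = x := abs_of_nonneg hx1
      have hxle : |x| ≤ y := by rw [hax]; linarith
      have h0 := hL1 x hxle
      have hf1 : (1 + (x + y)) ^ (1-κ) ≤ (1 + y) ^ (1-κ) :=
        Real.rpow_le_rpow_of_nonpos (by linarith) (by linarith) (by linarith)
      have hf3 : (1 + Real.log ((1 + y) / (1 + |x|))) ^ b ≤ D * (1 + y) ^ (κ-2) := by
        refine le_trans (Real.rpow_le_rpow (by linarith) ?_ hb) hlb
        have hr : (1 + y) / (1 + |x|) ≤ 1 + y := by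
          rw [div_le_iff₀ (by positivity)]
          nlinarith [abs_nonneg x]
        have := Real.log_le_log (by positivity) hr
        linarith
      rw [hF, hg]
      simp only [ha, hax] at hf3 h0 ⊢
      gcongr
    have hInt : (∫ x in (0:ℝ)..y, (1 + x) ^ (-ν)) ≤ (1 + y) ^ (1-ν) / (1 - ν) := by
      rw [int_one_add_rpow _ _ (fun h => by have := neg_injective h; linarith) hy,
        show -ν + 1 = 1 - ν by ring]
      gcongr
      linarith [Real.rpow_nonneg h1y.le (1-ν)]
    have hpow : (1+y) ^ (1-κ) * (1+y) ^ (1-ν) * (1+y) ^ (κ-2) = (1+y) ^ (-ν) := by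
      rw [← Real.rpow_add h1y, ← Real.rpow_add h1y]
      congr 1; ring
    calc ∫ x in (0:ℝ)..y, F x ≤ ∫ x in (0:ℝ)..y, g x := hmono
      _ = (1 + y) ^ (1-κ) * (∫ x in (0:ℝ)..y, (1 + x) ^ (-ν)) *
          (D * (1 + y) ^ (κ-2)) := by
          rw [hg, intervalIntegral.integral_mul_const, intervalIntegral.integral_const_mul]
      _ ≤ (1 + y) ^ (1-κ) * ((1 + y) ^ (1-ν) / (1 - ν)) * (D * (1 + y) ^ (κ-2)) := by
          gcongr
      _ = D / (1 - ν) * ((1+y) ^ (1-κ) * (1+y) ^ (1-ν) * (1+y) ^ (κ-2)) := by ring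
      _ = D / (1 - ν) * (1 + y) ^ (-ν) := by rw [hpow]
  have hsplit : ∫ x in (-y)..y, F x =
      (∫ x in (-y)..(-y/2), F x) + ((∫ x in (-y/2)..(0:ℝ), F x) + ∫ x in (0:ℝ)..y, F x) := by
    rw [intervalIntegral.integral_add_adjacent_intervals (hFc.intervalIntegrable _ _)
        (hFc.intervalIntegrable _ _),
      intervalIntegral.integral_add_adjacent_intervals (hFc.intervalIntegrable _ _)
        (hFc.intervalIntegrable _ _)]
  calc ∫ x in (-y)..y, F x
      = (∫ x in (-y)..(-y/2), F x) + ((∫ x in (-y/2)..(0:ℝ), F x) + ∫ x in (0:ℝ)..y, F x) :=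
        hsplit
    _ ≤ 2 ^ ν * (1 + Real.log 2) ^ b / (κ - 2) * (1 + y) ^ (-ν) +
        (2 ^ (κ-1) * D / (1 - ν) * (1 + y) ^ (-ν) + D / (1 - ν) * (1 + y) ^ (-ν)) := by
        gcongr
    _ = (2 ^ ν * (1 + Real.log 2) ^ b / (κ - 2) + 2 ^ (κ-1) * D / (1 - ν) + D / (1 - ν)) *
        (1 + y) ^ (-ν) := by ring
end

section
/- Let a > 0 and b be real numbers with b > -a. Then there exists a constant C = C(a,b) such that for all r, t > 0: ∫_{|t-r|}^{t+r} (1+λ)^b / (r - t + λ)^{1-a} dλ ≤ C · r^a · (1+t+r)^b. -/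
open MeasureTheory

lemma aux_integrable (c p d s : ℝ) (hp : -1 < p) :
    IntervalIntegrable (fun x => (x + c) ^ p) volume d s := by
  have h := (intervalIntegral.intervalIntegrable_rpow' (a := d + c) (b := s + c) hp).comp_add_right c
  simpa using h

lemma aux_int_le (c p d s : ℝ) (hp : -1 < p) (hdc : 0 ≤ d + c) :
    (∫ x in d..s, (x + c) ^ p) ≤ (s + c) ^ (p + 1) / (p + 1) := by
  rw [intervalIntegral.integral_comp_add_right (fun x => x ^ p) c,
      integral_rpow (Or.inl hp)]
  have h1 : 0 ≤ (d + c) ^ (p + 1) := Real.rpow_nonneg hdc _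
  have h2 : 0 < p + 1 := by linarith
  gcongr
  linarith

theorem stmt2 (a b : ℝ) (ha : 0 < a) (hb : -a < b) :
    ∃ C : ℝ, 0 < C ∧ ∀ r t : ℝ, 0 < r → 0 < t →
      (∫ l in |t - r|..(t + r), (1 + l) ^ b / (r - t + l) ^ (1 - a)) ≤
        C * r ^ a * (1 + t + r) ^ b := by
  set m := min b 0 with hm
  have hm0 : m ≤ 0 := min_le_right _ _
  have hmb : m ≤ b := min_le_left _ _
  have hma : -a < m := lt_min hb (by linarith)
  have ham : 0 < a + m := by linarith
  set e := b - m with he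
  have he0 : 0 ≤ e := by simp only [he]; linarith
  have hem : e + m = b := by simp [he]
  refine ⟨(2:ℝ) ^ (a - 2*m) * (1/a + 1/(a+m)), by positivity, ?_⟩
  intro r t hr ht
  set d := |t - r| with hd
  have hd0 : 0 ≤ d := abs_nonneg _
  have hdtr : t - r ≤ d := le_abs_self _
  have hdrt : r - t ≤ d := by rw [hd, abs_sub_comm]; exact le_abs_self _
  have hdle : d ≤ t + r := abs_le.mpr ⟨by linarith, by linarith⟩
  have htr1 : 0 < 1 + t + r := by linarith
  have hduc : 0 ≤ d + (r - t) := by linarith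
  by_cases hint : IntervalIntegrable (fun l => (1 + l) ^ b / (r - t + l) ^ (1 - a)) volume d (t+r)
  swap
  · rw [intervalIntegral.integral_undef hint]
    positivity
  have hne : ∀ᵐ x ∂(volume.restrict (Set.Icc d (t+r))), x ≠ d := by
    refine ae_restrict_of_ae ?_
    have hs : {x : ℝ | ¬ x ≠ d} = {d} := by ext x; simp
    rw [ae_iff, hs]
    exact measure_singleton d
  -- pointwise decomposition
  have hdecomp : ∀ x ∈ Set.Icc d (t+r), x ≠ d →
      (1 + x) ^ b / (r - t + x) ^ (1 - a)
        = (1 + x) ^ e * ((1 + x) ^ m * (x + (r - t)) ^ (a - 1)) := by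
    intro x hx hxd
    have hu : 0 < r - t + x := by
      have : d < x := lt_of_le_of_ne hx.1 (Ne.symm hxd)
      linarith
    have h1x : 0 < 1 + x := by linarith [hx.1]
    rw [div_eq_mul_inv, ← Real.rpow_neg hu.le, neg_sub, ← mul_assoc,
      ← Real.rpow_add h1x, hem, add_comm (r - t) x]
  have hEbound : ∀ x ∈ Set.Icc d (t+r), (1 + x) ^ e ≤ (1 + t + r) ^ e := by
    intro x hx
    exact Real.rpow_le_rpow (by linarith [hx.1]) (by linarith [hx.2]) he0
  by_cases hcase : 2*r ≤ 1 + d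
  · -- Case A
    set K := (1 + t + r) ^ e * (1 + d) ^ m with hK
    have hK0 : 0 ≤ K := by positivity
    have hg : IntervalIntegrable (fun x => K * (x + (r - t)) ^ (a - 1)) volume d (t+r) :=
      (aux_integrable (r - t) (a - 1) d (t+r) (by linarith)).const_mul K
    have hae : (fun l => (1 + l) ^ b / (r - t + l) ^ (1 - a))
        ≤ᵐ[volume.restrict (Set.Icc d (t+r))] (fun x => K * (x + (r - t)) ^ (a - 1)) := by
      filter_upwards [hne, ae_restrict_mem measurableSet_Icc] with x hxd hx
      rw [hdecomp x hx hxd]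
      have hu : 0 < r - t + x := by
        have : d < x := lt_of_le_of_ne hx.1 (Ne.symm hxd)
        linarith
      have h1x : 0 < 1 + x := by linarith [hx.1]
      have hMx : (1 + x) ^ m ≤ (1 + d) ^ m :=
        Real.rpow_le_rpow_of_nonpos (by linarith) (by linarith [hx.1]) hm0
      have h2 : 0 ≤ (x + (r - t)) ^ (a - 1) := Real.rpow_nonneg (by linarith) _
      calc (1 + x) ^ e * ((1 + x) ^ m * (x + (r - t)) ^ (a - 1))
          ≤ (1 + t + r) ^ e * ((1 + d) ^ m * (x + (r - t)) ^ (a - 1)) := by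
            exact mul_le_mul (hEbound x hx) (mul_le_mul_of_nonneg_right hMx h2)
              (mul_nonneg (Real.rpow_nonneg h1x.le _) h2)
              (Real.rpow_nonneg htr1.le _)
        _ = K * (x + (r - t)) ^ (a - 1) := by rw [hK]; ring
    calc (∫ l in d..(t+r), (1 + l) ^ b / (r - t + l) ^ (1 - a))
        ≤ ∫ x in d..(t+r), K * (x + (r - t)) ^ (a - 1) :=
          intervalIntegral.integral_mono_ae_restrict hdle hint hg hae
      _ = K * ∫ x in d..(t+r), (x + (r - t)) ^ (a - 1) := intervalIntegral.integral_const_mul _ _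
      _ ≤ K * ((t + r + (r - t)) ^ (a - 1 + 1) / (a - 1 + 1)) := by
          apply mul_le_mul_of_nonneg_left (aux_int_le _ _ _ _ (by linarith) hduc) hK0
      _ ≤ 2 ^ (a - 2*m) * (1/a + 1/(a+m)) * r ^ a * (1 + t + r) ^ b := by
          rw [show t + r + (r - t) = 2*r from by ring, show a - 1 + 1 = a from by ring]
          have hMd : (1 + d) ^ m ≤ (1 + t + r) ^ m * 2 ^ (-m) := by
            calc (1 + d) ^ m ≤ ((1 + t + r)/2) ^ m :=
                  Real.rpow_le_rpow_of_nonpos (by positivity) (by linarith) hm0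
              _ = (1 + t + r) ^ m * 2 ^ (-m) := by
                  rw [Real.div_rpow htr1.le (by norm_num : (0:ℝ) ≤ 2),
                    Real.rpow_neg (by norm_num : (0:ℝ) ≤ 2), div_eq_mul_inv]
          have h2ra : (2*r) ^ a = 2 ^ a * r ^ a := Real.mul_rpow (by norm_num) hr.le
          have hpow1 : (1 + t + r) ^ e * (1 + t + r) ^ m = (1 + t + r) ^ b := by
            rw [← Real.rpow_add htr1, hem]
          have hpow2 : (2:ℝ) ^ (-m) * 2 ^ a = 2 ^ (a - m) := by
            rw [← Real.rpow_add two_pos]; congr 1; ring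
          have hX : 0 ≤ r ^ a * (1 + t + r) ^ b :=
            mul_nonneg (Real.rpow_nonneg hr.le _) (Real.rpow_nonneg htr1.le _)
          calc K * ((2*r) ^ a / a)
              ≤ ((1 + t + r) ^ e * ((1 + t + r) ^ m * 2 ^ (-m))) * ((2*r) ^ a / a) := by
                apply mul_le_mul_of_nonneg_right
                  (mul_le_mul_of_nonneg_left hMd (Real.rpow_nonneg htr1.le _))
                apply div_nonneg (Real.rpow_nonneg (by linarith) _) ha.le
            _ = 2 ^ (a - m) / a * (r ^ a * (1 + t + r) ^ b) := by
                rw [h2ra, ← hpow1, ← hpow2]; ring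
            _ ≤ 2 ^ (a - 2*m) * (1/a + 1/(a+m)) * r ^ a * (1 + t + r) ^ b := by
                have h1 : (2:ℝ) ^ (a - m) ≤ 2 ^ (a - 2*m) :=
                  Real.rpow_le_rpow_of_exponent_le one_le_two (by linarith)
                have h3 : 1/a ≤ 1/a + 1/(a+m) := le_add_of_nonneg_right (by positivity)
                have hC : (2:ℝ) ^ (a - m) / a ≤ 2 ^ (a - 2*m) * (1/a + 1/(a+m)) := by
                  calc (2:ℝ) ^ (a - m) / a = 2 ^ (a - m) * (1/a) := by ring
                    _ ≤ 2 ^ (a - 2*m) * (1/a + 1/(a+m)) :=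
                        mul_le_mul h1 h3 (by positivity) (Real.rpow_nonneg (by norm_num) _)
                exact (mul_le_mul_of_nonneg_right hC hX).trans_eq (by ring)
  · -- Case B
    push_neg at hcase
    set K := (1 + t + r) ^ e * 2 ^ (-m) with hK
    have hK0 : 0 ≤ K :=
      mul_nonneg (Real.rpow_nonneg htr1.le _) (Real.rpow_nonneg (by norm_num) _)
    have hpB : -1 < m + (a - 1) := by linarith
    have hg : IntervalIntegrable (fun x => K * (x + (r - t)) ^ (m + (a - 1))) volume d (t+r) :=
      (aux_integrable (r - t) (m + (a - 1)) d (t+r) hpB).const_mul K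
    have hae : (fun l => (1 + l) ^ b / (r - t + l) ^ (1 - a))
        ≤ᵐ[volume.restrict (Set.Icc d (t+r))]
          (fun x => K * (x + (r - t)) ^ (m + (a - 1))) := by
      filter_upwards [hne, ae_restrict_mem measurableSet_Icc] with x hxd hx
      rw [hdecomp x hx hxd]
      have hu : 0 < r - t + x := by
        have : d < x := lt_of_le_of_ne hx.1 (Ne.symm hxd)
        linarith
      have hux : 0 < x + (r - t) := by linarith
      have h1x : 0 < 1 + x := by linarith [hx.1]
      have hMx : (1 + x) ^ m ≤ ((x + (r - t))/2) ^ m :=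
        Real.rpow_le_rpow_of_nonpos (by linarith) (by linarith [hx.1]) hm0
      have heq : ((x + (r - t))/2) ^ m * (x + (r - t)) ^ (a - 1)
          = 2 ^ (-m) * (x + (r - t)) ^ (m + (a - 1)) := by
        rw [Real.div_rpow hux.le (by norm_num : (0:ℝ) ≤ 2), div_mul_eq_mul_div,
          ← Real.rpow_add hux, Real.rpow_neg (by norm_num : (0:ℝ) ≤ 2)]
        ring
      calc (1 + x) ^ e * ((1 + x) ^ m * (x + (r - t)) ^ (a - 1))
          ≤ (1 + t + r) ^ e * (((x + (r - t))/2) ^ m * (x + (r - t)) ^ (a - 1)) :=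
            mul_le_mul (hEbound x hx)
              (mul_le_mul_of_nonneg_right hMx (Real.rpow_nonneg hux.le _))
              (mul_nonneg (Real.rpow_nonneg h1x.le _) (Real.rpow_nonneg hux.le _))
              (Real.rpow_nonneg htr1.le _)
        _ = K * (x + (r - t)) ^ (m + (a - 1)) := by rw [heq, hK]; ring
    calc (∫ l in d..(t+r), (1 + l) ^ b / (r - t + l) ^ (1 - a))
        ≤ ∫ x in d..(t+r), K * (x + (r - t)) ^ (m + (a - 1)) :=
          intervalIntegral.integral_mono_ae_restrict hdle hint hg hae
      _ = K * ∫ x in d..(t+r), (x + (r - t)) ^ (m + (a - 1)) :=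
          intervalIntegral.integral_const_mul _ _
      _ ≤ K * ((t + r + (r - t)) ^ (m + (a - 1) + 1) / (m + (a - 1) + 1)) :=
          mul_le_mul_of_nonneg_left (aux_int_le _ _ _ _ hpB hduc) hK0
      _ ≤ 2 ^ (a - 2*m) * (1/a + 1/(a+m)) * r ^ a * (1 + t + r) ^ b := by
          rw [show t + r + (r - t) = 2*r from by ring,
            show m + (a - 1) + 1 = a + m from by ring]
          have h2ra : (2*r) ^ (a+m) = 2 ^ (a+m) * (r ^ a * r ^ m) := by
            rw [Real.mul_rpow (by norm_num : (0:ℝ) ≤ 2) hr.le, Real.rpow_add hr]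
          have hquarter : (1 + t + r)/4 ≤ r := by linarith
          have hMr : r ^ m ≤ (1 + t + r) ^ m * 4 ^ (-m) := by
            calc r ^ m ≤ ((1 + t + r)/4) ^ m :=
                  Real.rpow_le_rpow_of_nonpos (by positivity) hquarter hm0
              _ = (1 + t + r) ^ m * 4 ^ (-m) := by
                  rw [Real.div_rpow htr1.le (by norm_num : (0:ℝ) ≤ 4),
                    Real.rpow_neg (by norm_num : (0:ℝ) ≤ 4), div_eq_mul_inv]
          have h24 : (2:ℝ) ^ (2:ℝ) = 4 := by
            rw [show (2:ℝ) = ((2:ℕ):ℝ) from by norm_num, Real.rpow_natCast]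
            norm_num
          have h4 : (4:ℝ) ^ (-m) = (2:ℝ) ^ (2*(-m)) := by
            rw [Real.rpow_mul (by norm_num : (0:ℝ) ≤ 2), h24]
          have hpow1 : (1 + t + r) ^ e * (1 + t + r) ^ m = (1 + t + r) ^ b := by
            rw [← Real.rpow_add htr1, hem]
          have hpows : (2:ℝ) ^ (-m) * (2 ^ (a+m) * 2 ^ (2*(-m))) = 2 ^ (a - 2*m) := by
            rw [← Real.rpow_add two_pos, ← Real.rpow_add two_pos]; congr 1; ring
          have hX : 0 ≤ r ^ a * (1 + t + r) ^ b :=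
            mul_nonneg (Real.rpow_nonneg hr.le _) (Real.rpow_nonneg htr1.le _)
          have hcoef : 0 ≤ 2 ^ (-m) * 2 ^ (a+m) / (a+m) * r ^ a * (1 + t + r) ^ e :=
            mul_nonneg (mul_nonneg (div_nonneg (mul_nonneg
              (Real.rpow_nonneg (by norm_num) _) (Real.rpow_nonneg (by norm_num) _)) ham.le)
              (Real.rpow_nonneg hr.le _)) (Real.rpow_nonneg htr1.le _)
          calc K * ((2*r) ^ (a+m) / (a+m))
              = (2 ^ (-m) * 2 ^ (a+m) / (a+m) * r ^ a * (1 + t + r) ^ e) * r ^ m := by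
                rw [h2ra, hK]; ring
            _ ≤ (2 ^ (-m) * 2 ^ (a+m) / (a+m) * r ^ a * (1 + t + r) ^ e)
                  * ((1 + t + r) ^ m * 4 ^ (-m)) :=
                mul_le_mul_of_nonneg_left hMr hcoef
            _ = 2 ^ (a - 2*m) / (a+m) * (r ^ a * (1 + t + r) ^ b) := by
                rw [h4, ← hpow1, ← hpows]; ring
            _ ≤ 2 ^ (a - 2*m) * (1/a + 1/(a+m)) * r ^ a * (1 + t + r) ^ b := by
                have h3 : 1/(a+m) ≤ 1/a + 1/(a+m) := le_add_of_nonneg_left (by positivity)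
                have hC : (2:ℝ) ^ (a - 2*m) / (a+m) ≤ 2 ^ (a - 2*m) * (1/a + 1/(a+m)) := by
                  calc (2:ℝ) ^ (a - 2*m) / (a+m) = 2 ^ (a - 2*m) * (1/(a+m)) := by ring
                    _ ≤ 2 ^ (a - 2*m) * (1/a + 1/(a+m)) :=
                        mul_le_mul_of_nonneg_left h3 (Real.rpow_nonneg (by norm_num) _)
                exact (mul_le_mul_of_nonneg_right hC hX).trans_eq (by ring)
end

section
/- Let a > 0 and b be real numbers with b < -a. Then there exists a constant C = C(a,b) such that for all r, t > 0: ∫_{|t-r|}^{t+r} (1+λ)^b / (r - t + λ)^{1-a} dλ ≤ C · r^a · (1+t+r)^{-a} · (1+|t-r|)^{a+b}. -/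
open MeasureTheory

private lemma stmt3_div_rpow (y x : ℝ) (hx : 0 ≤ x) (a : ℝ) :
    y / x ^ (1 - a) = y * x ^ (a - 1) := by
  rw [show (a - 1 : ℝ) = -(1 - a) by ring, Real.rpow_neg hx, div_eq_mul_inv]

set_option maxHeartbeats 2000000 in
theorem stmt3 (a b : ℝ) (ha : 0 < a) (hb : b < -a) :
    ∃ C : ℝ, 0 < C ∧ ∀ r t : ℝ, 0 < r → 0 < t →
      (∫ l in |t - r|..(t + r), (1 + l) ^ b / (r - t + l) ^ (1 - a)) ≤
        C * r ^ a * (1 + t + r) ^ (-a) * (1 + |t - r|) ^ (a + b) := by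
  have hb0 : b < 0 := by linarith
  have hab : a + b < 0 := by linarith
  set K : ℝ := 2 ^ (a - 1) + 2 ^ (1 - a) with hKdef
  have hK : 0 < K := by positivity
  set C : ℝ := 4 ^ a * (1 / a + 3 ^ a / a + K / (-(a + b))) with hCdef
  have h4a : (0:ℝ) < 4 ^ a := Real.rpow_pos_of_pos (by norm_num) a
  have h3a : (0:ℝ) < 3 ^ a := Real.rpow_pos_of_pos (by norm_num) a
  have hC' : (0:ℝ) < 3 ^ a / a + K / (-(a + b)) := by
    have h2 : 0 < (3:ℝ) ^ a / a := by positivity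
    have h3 : 0 < K / (-(a + b)) := div_pos hK (by linarith)
    linarith
  have hC : 0 < C := by
    apply mul_pos h4a
    have h1 : 0 < 1 / a := by positivity
    linarith
  refine ⟨C, hC, ?_⟩
  intro r t hr ht
  set c : ℝ := t - r with hc
  set d : ℝ := |c| with hd
  set R : ℝ := t + r with hRdef
  have hd0 : 0 ≤ d := abs_nonneg _
  have hcd : c ≤ d := le_abs_self _
  have hdc : -d ≤ c := neg_abs_le _
  have hdR : d ≤ R := by
    rw [hd]
    exact abs_le.mpr ⟨by rw [hc, hRdef]; linarith, by rw [hc, hRdef]; linarith⟩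
  have h1d : (0:ℝ) < 1 + d := by linarith
  have h1tr : (0:ℝ) < 1 + t + r := by linarith
  -- rewrite the integrand
  have hcong : (∫ l in d..R, (1 + l) ^ b / (r - t + l) ^ (1 - a))
      = ∫ l in d..R, (1 + l) ^ b * (l - c) ^ (a - 1) := by
    apply intervalIntegral.integral_congr
    intro l hl
    rw [Set.uIcc_of_le hdR] at hl
    have h1 : 0 ≤ l - c := by have := hl.1; linarith
    have h2 : r - t + l = l - c := by rw [hc]; ring
    simp only [h2]
    rw [stmt3_div_rpow _ _ h1]
  -- integrability on subintervals of [d, ∞)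
  have hg_int : ∀ u v : ℝ, d ≤ u → d ≤ v →
      IntervalIntegrable (fun l => (1 + l) ^ b * (l - c) ^ (a - 1)) volume u v := by
    intro u v hu hv
    apply IntervalIntegrable.continuousOn_mul
    · have h0 := intervalIntegral.intervalIntegrable_rpow' (a := u - c) (b := v - c)
        (r := a - 1) (by linarith)
      have h1 := h0.comp_sub_right c
      simpa using h1
    · apply ContinuousOn.rpow_const
      · exact (continuous_const.add continuous_id).continuousOn
      · intro x hx
        have hx0 : d ≤ x := by
          rcases Set.mem_uIcc.mp hx with h | h
          · linarith [h.1]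
          · linarith [h.1]
        exact Or.inl (by intro h; nlinarith)
  have hshift_int : ∀ u v : ℝ,
      IntervalIntegrable (fun l => (l - c) ^ (a - 1)) volume u v := by
    intro u v
    have h0 := intervalIntegral.intervalIntegrable_rpow' (a := u - c) (b := v - c)
      (r := a - 1) (by linarith : (-1:ℝ) < a - 1)
    have h1 := h0.comp_sub_right c
    simpa using h1
  -- value of the shifted rpow integral
  have hval : ∀ u v : ℝ, (∫ l in u..v, (l - c) ^ (a - 1))
      = ((v - c) ^ a - (u - c) ^ a) / a := by
    intro u v
    rw [intervalIntegral.integral_comp_sub_right (fun x => x ^ (a - 1)) c,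
      integral_rpow (Or.inl (by linarith)),
      show a - 1 + 1 = a by ring]
  have hval2 : ∀ u v : ℝ, 0 ≤ u → 0 ≤ v →
      (∫ l in u..v, (1 + l) ^ (a + b - 1))
        = ((1 + v) ^ (a + b) - (1 + u) ^ (a + b)) / (a + b) := by
    intro u v hu hv
    have h : (∫ l in u..v, (1 + l) ^ (a + b - 1))
        = ∫ l in u..v, (l + 1) ^ (a + b - 1) := by
      apply intervalIntegral.integral_congr
      intro l _
      show (1 + l) ^ (a + b - 1) = (l + 1) ^ (a + b - 1)
      rw [add_comm 1 l]
    rw [h, intervalIntegral.integral_comp_add_right (fun x => x ^ (a + b - 1)) 1,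
      integral_rpow (Or.inr ⟨by intro hh; linarith,
        Set.notMem_uIcc_of_lt (by linarith) (by linarith)⟩),
      show a + b - 1 + 1 = a + b by ring, add_comm v 1, add_comm u 1]
  rw [hcong]
  have hsplit : (1 + d) ^ b = (1 + d) ^ (-a) * (1 + d) ^ (a + b) := by
    rw [← Real.rpow_add h1d]
    congr 1
    ring
  have hXnn : 0 ≤ r ^ a * (1 + t + r) ^ (-a) * (1 + d) ^ (a + b) := by
    have h1 : (0:ℝ) ≤ r ^ a := Real.rpow_nonneg hr.le _
    have h2 : (0:ℝ) ≤ (1 + t + r) ^ (-a) := Real.rpow_nonneg h1tr.le _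
    have h3 : (0:ℝ) ≤ (1 + d) ^ (a + b) := Real.rpow_nonneg h1d.le _
    positivity
  have hdab : (0:ℝ) < (1 + d) ^ (a + b) := Real.rpow_pos_of_pos h1d _
  by_cases hcase : R ≤ 1 + 2 * d
  · -- crude bound case
    have hbd_int : IntervalIntegrable (fun l => (1 + d) ^ b * (l - c) ^ (a - 1))
        volume d R := (hshift_int d R).const_mul _
    have hmono : (∫ l in d..R, (1 + l) ^ b * (l - c) ^ (a - 1))
        ≤ ∫ l in d..R, (1 + d) ^ b * (l - c) ^ (a - 1) := by
      apply intervalIntegral.integral_mono_on hdR (hg_int d R le_rfl hdR) hbd_int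
      intro x hx
      have h0 : 0 ≤ (x - c) ^ (a - 1) := Real.rpow_nonneg (by linarith [hx.1]) _
      exact mul_le_mul_of_nonneg_right
        (Real.rpow_le_rpow_of_nonpos h1d (by linarith [hx.1]) hb0.le) h0
    rw [intervalIntegral.integral_const_mul, hval d R] at hmono
    have hRc : R - c = 2 * r := by rw [hRdef, hc]; ring
    have h2r : (R - c) ^ a = 2 ^ a * r ^ a := by
      rw [hRc, Real.mul_rpow (by norm_num) hr.le]
    have hdcnn : 0 ≤ (d - c) ^ a := Real.rpow_nonneg (by linarith) _
    have hb_pos : 0 < (1 + d) ^ b := Real.rpow_pos_of_pos h1d _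
    have step1 : (∫ l in d..R, (1 + l) ^ b * (l - c) ^ (a - 1))
        ≤ (1 + d) ^ b * (2 ^ a * r ^ a / a) := by
      refine hmono.trans ?_
      rw [← h2r]
      apply mul_le_mul_of_nonneg_left _ hb_pos.le
      exact div_le_div_of_nonneg_right (by linarith) ha.le
    have e1 : ((2:ℝ) / (1 + d)) ^ a = 2 ^ a * (1 + d) ^ (-a) := by
      rw [Real.div_rpow (by norm_num) h1d.le, Real.rpow_neg h1d.le, div_eq_mul_inv]
    have e2 : ((4:ℝ) / (1 + t + r)) ^ a = 4 ^ a * (1 + t + r) ^ (-a) := by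
      rw [Real.div_rpow (by norm_num) h1tr.le, Real.rpow_neg h1tr.le, div_eq_mul_inv]
    have e3 : (2:ℝ) / (1 + d) ≤ 4 / (1 + t + r) := by
      rw [div_le_div_iff₀ h1d h1tr]
      have : t + r ≤ 1 + 2 * d := by rw [hRdef] at hcase; linarith
      linarith
    have e4 : (2:ℝ) ^ a * (1 + d) ^ (-a) ≤ 4 ^ a * (1 + t + r) ^ (-a) := by
      rw [← e1, ← e2]
      exact Real.rpow_le_rpow (by positivity) e3 ha.le
    have step2 : (1 + d) ^ b * (2 ^ a * r ^ a / a)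
        ≤ 4 ^ a / a * r ^ a * (1 + t + r) ^ (-a) * (1 + d) ^ (a + b) := by
      have lhs_eq : (1 + d) ^ b * (2 ^ a * r ^ a / a)
          = (2 ^ a * (1 + d) ^ (-a)) * ((1 + d) ^ (a + b) * r ^ a * a⁻¹) := by
        rw [hsplit]; ring
      have rhs_eq : 4 ^ a / a * r ^ a * (1 + t + r) ^ (-a) * (1 + d) ^ (a + b)
          = (4 ^ a * (1 + t + r) ^ (-a)) * ((1 + d) ^ (a + b) * r ^ a * a⁻¹) := by ring
      rw [lhs_eq, rhs_eq]
      apply mul_le_mul_of_nonneg_right e4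
      have h1 : (0:ℝ) ≤ r ^ a := Real.rpow_nonneg hr.le _
      positivity
    have hC1 : 4 ^ a / a ≤ C := by
      rw [hCdef]
      have he : 4 ^ a / a = 4 ^ a * (1 / a) := by ring
      rw [he]
      apply mul_le_mul_of_nonneg_left _ h4a.le
      linarith
    refine (step1.trans step2).trans ?_
    have h := mul_le_mul_of_nonneg_right hC1 hXnn
    calc 4 ^ a / a * r ^ a * (1 + t + r) ^ (-a) * (1 + d) ^ (a + b)
        = 4 ^ a / a * (r ^ a * (1 + t + r) ^ (-a) * (1 + d) ^ (a + b)) := by ring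
      _ ≤ C * (r ^ a * (1 + t + r) ^ (-a) * (1 + d) ^ (a + b)) := h
      _ = C * r ^ a * (1 + t + r) ^ (-a) * (1 + d) ^ (a + b) := by ring
  · -- main case: split at p = 1 + 2d
    push_neg at hcase
    set p : ℝ := 1 + 2 * d with hp
    have hdp : d ≤ p := by rw [hp]; linarith
    have hpR : p ≤ R := by rw [hp]; linarith
    have h0p : (0:ℝ) < p := by rw [hp]; linarith
    have hsplitI : (∫ l in d..R, (1 + l) ^ b * (l - c) ^ (a - 1))
        = (∫ l in d..p, (1 + l) ^ b * (l - c) ^ (a - 1))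
          + ∫ l in p..R, (1 + l) ^ b * (l - c) ^ (a - 1) :=
      (intervalIntegral.integral_add_adjacent_intervals
        (hg_int d p le_rfl hdp) (hg_int p R hdp hdR)).symm
    -- bound on [d, p]
    have hI1 : (∫ l in d..p, (1 + l) ^ b * (l - c) ^ (a - 1))
        ≤ 3 ^ a / a * (1 + d) ^ (a + b) := by
      have hmono : (∫ l in d..p, (1 + l) ^ b * (l - c) ^ (a - 1))
          ≤ ∫ l in d..p, (1 + d) ^ b * (l - c) ^ (a - 1) := by
        apply intervalIntegral.integral_mono_on hdp (hg_int d p le_rfl hdp)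
          ((hshift_int d p).const_mul _)
        intro x hx
        have h0 : 0 ≤ (x - c) ^ (a - 1) := Real.rpow_nonneg (by linarith [hx.1]) _
        exact mul_le_mul_of_nonneg_right
          (Real.rpow_le_rpow_of_nonpos h1d (by linarith [hx.1]) hb0.le) h0
      rw [intervalIntegral.integral_const_mul, hval d p] at hmono
      have hpc : (p - c) ^ a ≤ 3 ^ a * (1 + d) ^ a := by
        rw [← Real.mul_rpow (by norm_num) h1d.le]
        apply Real.rpow_le_rpow (by rw [hp]; linarith) (by rw [hp]; linarith) ha.le
      have hdcnn : 0 ≤ (d - c) ^ a := Real.rpow_nonneg (by linarith) _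
      have hb_pos : 0 < (1 + d) ^ b := Real.rpow_pos_of_pos h1d _
      have hstep : (1 + d) ^ b * (((p - c) ^ a - (d - c) ^ a) / a)
          ≤ (1 + d) ^ b * ((3 ^ a * (1 + d) ^ a) / a) := by
        apply mul_le_mul_of_nonneg_left _ hb_pos.le
        exact div_le_div_of_nonneg_right (by linarith) ha.le
      refine hmono.trans (hstep.trans (le_of_eq ?_))
      rw [show (1 + d) ^ b * (3 ^ a * (1 + d) ^ a / a)
          = 3 ^ a / a * ((1 + d) ^ a * (1 + d) ^ b) by ring, ← Real.rpow_add h1d]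
    -- bound on [p, R]
    have hcontbd : IntervalIntegrable (fun l => K * (1 + l) ^ (a + b - 1)) volume p R := by
      apply ContinuousOn.intervalIntegrable
      apply ContinuousOn.mul continuousOn_const
      apply ContinuousOn.rpow_const (continuous_const.add continuous_id).continuousOn
      intro x hx
      rw [Set.uIcc_of_le hpR] at hx
      have hx1 : (0:ℝ) < 1 + x := by
        have := hx.1
        rw [hp] at this
        linarith
      exact Or.inl (ne_of_gt hx1)
    have hptwise : ∀ x ∈ Set.Icc p R,
        (1 + x) ^ b * (x - c) ^ (a - 1) ≤ K * (1 + x) ^ (a + b - 1) := by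
      intro x hx
      have hxp : p ≤ x := hx.1
      rw [hp] at hxp
      have hx1 : (0:ℝ) < 1 + x := by linarith
      have hlow : (1 + x) / 2 ≤ x - c := by linarith
      have hhigh : x - c ≤ 2 * (1 + x) := by linarith
      have hxc : (0:ℝ) ≤ x - c := by linarith
      have hbase : (x - c) ^ (a - 1) ≤ K * (1 + x) ^ (a - 1) := by
        have h1x : (0:ℝ) ≤ (1 + x) ^ (a - 1) := Real.rpow_nonneg hx1.le _
        have h2a1 : (0:ℝ) ≤ (2:ℝ) ^ (a - 1) := Real.rpow_nonneg (by norm_num) _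
        have h21a : (0:ℝ) ≤ (2:ℝ) ^ (1 - a) := Real.rpow_nonneg (by norm_num) _
        rcases le_or_gt 1 a with h1a | h1a
        · have hh := Real.rpow_le_rpow hxc hhigh (by linarith : (0:ℝ) ≤ a - 1)
          rw [Real.mul_rpow (by norm_num) hx1.le] at hh
          calc (x - c) ^ (a - 1) ≤ 2 ^ (a - 1) * (1 + x) ^ (a - 1) := hh
            _ ≤ K * (1 + x) ^ (a - 1) := by rw [hKdef]; nlinarith
        · have hh := Real.rpow_le_rpow_of_nonpos
            (by linarith : (0:ℝ) < (1 + x) / 2) hlow (by linarith : a - 1 ≤ 0)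
          rw [Real.div_rpow hx1.le (by norm_num)] at hh
          have h2 : (1 + x) ^ (a - 1) / 2 ^ (a - 1) = 2 ^ (1 - a) * (1 + x) ^ (a - 1) := by
            rw [show (1 - a : ℝ) = -(a - 1) by ring,
              Real.rpow_neg (by norm_num : (0:ℝ) ≤ 2)]
            ring
          rw [h2] at hh
          calc (x - c) ^ (a - 1) ≤ 2 ^ (1 - a) * (1 + x) ^ (a - 1) := hh
            _ ≤ K * (1 + x) ^ (a - 1) := by rw [hKdef]; nlinarith
      have hxb : (0:ℝ) ≤ (1 + x) ^ b := Real.rpow_nonneg hx1.le _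
      calc (1 + x) ^ b * (x - c) ^ (a - 1) ≤ (1 + x) ^ b * (K * (1 + x) ^ (a - 1)) :=
            mul_le_mul_of_nonneg_left hbase hxb
        _ = K * ((1 + x) ^ b * (1 + x) ^ (a - 1)) := by ring
        _ = K * (1 + x) ^ (a + b - 1) := by
            rw [← Real.rpow_add hx1, show b + (a - 1) = a + b - 1 by ring]
    have hI2 : (∫ l in p..R, (1 + l) ^ b * (l - c) ^ (a - 1))
        ≤ K / (-(a + b)) * (1 + d) ^ (a + b) := by
      have hmono : (∫ l in p..R, (1 + l) ^ b * (l - c) ^ (a - 1))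
          ≤ ∫ l in p..R, K * (1 + l) ^ (a + b - 1) :=
        intervalIntegral.integral_mono_on hpR (hg_int p R hdp hdR) hcontbd hptwise
      rw [intervalIntegral.integral_const_mul, hval2 p R h0p.le (by linarith)] at hmono
      refine hmono.trans ?_
      have hRnn : (0:ℝ) ≤ (1 + R) ^ (a + b) := Real.rpow_nonneg (by linarith) _
      have hpd : (1 + p) ^ (a + b) ≤ (1 + d) ^ (a + b) :=
        Real.rpow_le_rpow_of_nonpos h1d (by rw [hp]; linarith) hab.le
      have heq : ((1 + R) ^ (a + b) - (1 + p) ^ (a + b)) / (a + b)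
          = ((1 + p) ^ (a + b) - (1 + R) ^ (a + b)) / (-(a + b)) := by
        rw [div_neg, ← neg_div, neg_sub]
      have hkey : ((1 + R) ^ (a + b) - (1 + p) ^ (a + b)) / (a + b)
          ≤ (1 + d) ^ (a + b) / (-(a + b)) := by
        rw [heq]
        exact div_le_div_of_nonneg_right (by linarith) (by linarith : (0:ℝ) ≤ -(a + b))
      calc K * (((1 + R) ^ (a + b) - (1 + p) ^ (a + b)) / (a + b))
          ≤ K * ((1 + d) ^ (a + b) / (-(a + b))) :=
            mul_le_mul_of_nonneg_left hkey hK.le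
        _ = K / (-(a + b)) * (1 + d) ^ (a + b) := by ring
    -- combine
    have hI : (∫ l in d..R, (1 + l) ^ b * (l - c) ^ (a - 1))
        ≤ (3 ^ a / a + K / (-(a + b))) * (1 + d) ^ (a + b) := by
      rw [hsplitI]
      nlinarith
    have hr4 : 1 + t + r ≤ 4 * r := by
      rw [hRdef] at hcase
      rw [hc] at hcd
      linarith
    have hone : (1:ℝ) ≤ 4 ^ a * r ^ a * (1 + t + r) ^ (-a) := by
      have e : (4 * r / (1 + t + r)) ^ a = 4 ^ a * r ^ a * (1 + t + r) ^ (-a) := by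
        rw [Real.div_rpow (by positivity) h1tr.le,
          Real.mul_rpow (by norm_num) hr.le, Real.rpow_neg h1tr.le]
        ring
      have h1 : (1:ℝ) ≤ 4 * r / (1 + t + r) := by
        rw [le_div_iff₀ h1tr]
        linarith
      have := Real.rpow_le_rpow zero_le_one h1 ha.le
      rwa [Real.one_rpow, e] at this
    have h5 : 4 ^ a * (3 ^ a / a + K / (-(a + b))) ≤ C := by
      rw [hCdef]
      nlinarith [mul_pos h4a (show (0:ℝ) < 1 / a by positivity)]
    calc (∫ l in d..R, (1 + l) ^ b * (l - c) ^ (a - 1))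
        ≤ (3 ^ a / a + K / (-(a + b))) * (1 + d) ^ (a + b) := hI
      _ ≤ (4 ^ a * r ^ a * (1 + t + r) ^ (-a))
            * ((3 ^ a / a + K / (-(a + b))) * (1 + d) ^ (a + b)) := by
          have hh := mul_le_mul_of_nonneg_right hone
            (mul_nonneg hC'.le hdab.le)
          rw [one_mul] at hh
          linarith
      _ = (4 ^ a * (3 ^ a / a + K / (-(a + b))))
            * (r ^ a * (1 + t + r) ^ (-a) * (1 + d) ^ (a + b)) := by ring
      _ ≤ C * (r ^ a * (1 + t + r) ^ (-a) * (1 + d) ^ (a + b)) :=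
          mul_le_mul_of_nonneg_right h5 hXnn
      _ = C * r ^ a * (1 + t + r) ^ (-a) * (1 + d) ^ (a + b) := by ring
end

section
/- Let m ≥ a > 0 and κ > 2 with κ < m + 2. Then there is a constant C = C(a, m, κ) such that for all t ≥ r > 0: ∫₀^{t-r} ∫₀^{t-r-τ} λ^m (1+λ)^{1-κ} / ((t-r-τ)^{m+a} · (t-r-τ-λ)^{1-a}) dλ dτ ≤ C. -/
open MeasureTheory intervalIntegral Set

private lemma ii_sub_rpow {p : ℝ} (hp : -1 < p) (T c : ℝ) :
    IntervalIntegrable (fun l => (T - l) ^ p) volume c T := by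
  have h := (intervalIntegrable_rpow' (a := T - c) (b := T - T) hp).comp_sub_left T
  simpa using h

private lemma int_sub_rpow {a : ℝ} (ha : 0 < a) {T c : ℝ} :
    (∫ l in c..T, (T - l) ^ (a - 1)) = (T - c) ^ a / a := by
  rw [intervalIntegral.integral_comp_sub_left (fun x : ℝ => x ^ (a - 1)) T, sub_self,
    integral_rpow (Or.inl (by linarith)), sub_add_cancel,
    Real.zero_rpow ha.ne', sub_zero]

private lemma stmt5_inner (a m κ : ℝ) (ha : 0 < a) (ham : a ≤ m) (hκ : 2 < κ)
    (hκ2 : κ < m + 2) :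
    ∃ C1 : ℝ, 0 < C1 ∧ ∀ T : ℝ, 0 ≤ T →
      (∫ l in (0:ℝ)..T, l ^ m * (1 + l) ^ (1 - κ) / (T ^ (m + a) * (T - l) ^ (1 - a)))
        ≤ C1 * (1 + T) ^ (1 - κ) := by
  have hm : 0 < m := lt_of_lt_of_le ha ham
  have hmκ : 0 < m + 2 - κ := by linarith
  have hca : (0:ℝ) < 1 + (2:ℝ) ^ (1 - a) := by positivity
  set c1 : ℝ := (2:ℝ) ^ (κ - 1) / a with hc1
  set c2 : ℝ := (1 + (2:ℝ) ^ (1 - a)) * (2:ℝ) ^ (m + 1) / (m + 2 - κ) with hc2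
  have hc1pos : 0 < c1 := div_pos (Real.rpow_pos_of_pos two_pos _) ha
  have hc2pos : 0 < c2 := by
    apply div_pos _ hmκ
    have := Real.rpow_pos_of_pos (show (0:ℝ) < 2 by norm_num) (m + 1)
    nlinarith
  refine ⟨c1 + c2, by linarith, ?_⟩
  intro T hT0
  have h1T : (0:ℝ) < 1 + T := by linarith
  have hBpos : 0 < (1 + T) ^ (1 - κ) := Real.rpow_pos_of_pos h1T _
  rcases eq_or_lt_of_le hT0 with h0 | hT
  · rw [← h0, intervalIntegral.integral_same]
    positivity
  by_cases hint : IntervalIntegrable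
      (fun l => l ^ m * (1 + l) ^ (1 - κ) / (T ^ (m + a) * (T - l) ^ (1 - a))) volume 0 T
  swap
  · rw [intervalIntegral.integral_undef hint]; positivity
  have hfeq : ∀ l : ℝ, l ≤ T →
      l ^ m * (1 + l) ^ (1 - κ) / (T ^ (m + a) * (T - l) ^ (1 - a))
        = l ^ m * (1 + l) ^ (1 - κ) * (T ^ (-(m + a)) * (T - l) ^ (a - 1)) := by
    intro l hl
    have h1 : a - 1 = -(1 - a) := by ring
    rw [div_eq_mul_inv, mul_inv, h1, Real.rpow_neg hT.le, Real.rpow_neg (by linarith)]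
  rcases le_total T 1 with hT1 | hT1
  · -- small T : bound by T^(-a) * (T-l)^(a-1)
    have hg : IntervalIntegrable (fun l => T ^ (-a) * (T - l) ^ (a - 1)) volume 0 T :=
      (ii_sub_rpow (by linarith) T 0).const_mul _
    have hmono := intervalIntegral.integral_mono_on hT0 hint hg (fun l hl => by
      rw [hfeq l hl.2]
      have h2 : (0:ℝ) ≤ (T - l) ^ (a - 1) := Real.rpow_nonneg (by linarith [hl.2]) _
      have h3 : l ^ m * (1 + l) ^ (1 - κ) * T ^ (-(m + a)) ≤ T ^ (-a) := by
        have h4 : l ^ m ≤ T ^ m := Real.rpow_le_rpow hl.1 hl.2 hm.le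
        have h5 : (1 + l) ^ (1 - κ) ≤ 1 :=
          Real.rpow_le_one_of_one_le_of_nonpos (by linarith [hl.1]) (by linarith)
        have h7 : (0:ℝ) < T ^ (-(m + a)) := Real.rpow_pos_of_pos hT _
        have h8 : (0:ℝ) ≤ (1 + l) ^ (1 - κ) := Real.rpow_nonneg (by linarith [hl.1]) _
        calc l ^ m * (1 + l) ^ (1 - κ) * T ^ (-(m + a))
            ≤ T ^ m * 1 * T ^ (-(m + a)) := by
              apply mul_le_mul_of_nonneg_right _ h7.le
              exact mul_le_mul h4 h5 h8 (Real.rpow_nonneg hT.le _)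
          _ = T ^ (-a) := by
              rw [mul_one, ← Real.rpow_add hT]; congr 1; ring
      calc l ^ m * (1 + l) ^ (1 - κ) * (T ^ (-(m + a)) * (T - l) ^ (a - 1))
          = (l ^ m * (1 + l) ^ (1 - κ) * T ^ (-(m + a))) * (T - l) ^ (a - 1) := by ring
        _ ≤ T ^ (-a) * (T - l) ^ (a - 1) := mul_le_mul_of_nonneg_right h3 h2)
    have hval : (∫ l in (0:ℝ)..T, T ^ (-a) * (T - l) ^ (a - 1)) = 1 / a := by
      rw [intervalIntegral.integral_const_mul, int_sub_rpow ha, sub_zero,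
        ← mul_div_assoc, ← Real.rpow_add hT, neg_add_cancel, Real.rpow_zero]
    have h9 : (2:ℝ) ^ (1 - κ) ≤ (1 + T) ^ (1 - κ) :=
      Real.rpow_le_rpow_of_nonpos h1T (by linarith) (by linarith)
    have h10 : c1 * (2:ℝ) ^ (1 - κ) = 1 / a := by
      rw [hc1, div_mul_eq_mul_div, ← Real.rpow_add two_pos,
        show κ - 1 + (1 - κ) = 0 by ring, Real.rpow_zero]
    calc (∫ l in (0:ℝ)..T, l ^ m * (1 + l) ^ (1 - κ) / (T ^ (m + a) * (T - l) ^ (1 - a)))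
        ≤ 1 / a := hmono.trans_eq hval
      _ = c1 * (2:ℝ) ^ (1 - κ) := h10.symm
      _ ≤ c1 * (1 + T) ^ (1 - κ) := mul_le_mul_of_nonneg_left h9 hc1pos.le
      _ ≤ (c1 + c2) * (1 + T) ^ (1 - κ) := by nlinarith
  · -- large T : split at T/2
    have hsub1 : uIcc (0:ℝ) (T/2) ⊆ uIcc 0 T := by
      rw [uIcc_of_le (by linarith), uIcc_of_le hT.le]
      exact Icc_subset_Icc le_rfl (by linarith)
    have hsub2 : uIcc (T/2) T ⊆ uIcc 0 T := by
      rw [uIcc_of_le (by linarith), uIcc_of_le hT.le]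
      exact Icc_subset_Icc (by linarith) le_rfl
    have hi1 := hint.mono_set hsub1
    have hi2 := hint.mono_set hsub2
    rw [← intervalIntegral.integral_add_adjacent_intervals hi1 hi2]
    -- piece 1
    set K1 : ℝ := (1 + (2:ℝ) ^ (1 - a)) * (T ^ (a - 1) * T ^ (-(m + a))) with hK1
    have hK1pos : 0 < K1 := by
      have h1 := Real.rpow_pos_of_pos hT (a - 1)
      have h2 := Real.rpow_pos_of_pos hT (-(m + a))
      positivity
    have hgc : ContinuousOn (fun l : ℝ => K1 * (1 + l) ^ (m + 1 - κ)) (uIcc 0 (T/2)) := by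
      apply ContinuousOn.mul continuousOn_const
      apply ContinuousOn.rpow_const (by fun_prop)
      intro x hx
      rw [uIcc_of_le (by linarith)] at hx
      exact Or.inl (ne_of_gt (by nlinarith [hx.1]))
    have hg1 : IntervalIntegrable (fun l : ℝ => K1 * (1 + l) ^ (m + 1 - κ)) volume 0 (T/2) :=
      hgc.intervalIntegrable
    have hb1 := intervalIntegral.integral_mono_on (by linarith : (0:ℝ) ≤ T/2) hi1 hg1
      (fun l hl => by
        have hl0 : 0 ≤ l := hl.1
        have hlT : l ≤ T := by linarith [hl.2]
        rw [hfeq l hlT]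
        have hTl : (0:ℝ) < T - l := by linarith [hl.2]
        have hTa : (0:ℝ) ≤ T ^ (a - 1) := Real.rpow_nonneg hT.le _
        have hbd : (T - l) ^ (a - 1) ≤ (1 + (2:ℝ) ^ (1 - a)) * T ^ (a - 1) := by
          rcases le_total 1 a with h1a | h1a
          · have h11 : (T - l) ^ (a - 1) ≤ T ^ (a - 1) :=
              Real.rpow_le_rpow hTl.le (by linarith) (by linarith)
            nlinarith [Real.rpow_pos_of_pos (show (0:ℝ) < 2 by norm_num) (1 - a)]
          · have h11 : (T - l) ^ (a - 1) ≤ (T/2) ^ (a - 1) :=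
              Real.rpow_le_rpow_of_nonpos (by linarith) (by linarith [hl.2]) (by linarith)
            have h12 : (T/2) ^ (a - 1) = T ^ (a - 1) * (2:ℝ) ^ (1 - a) := by
              rw [Real.div_rpow hT.le (by norm_num), div_eq_mul_inv,
                ← Real.rpow_neg (by norm_num : (0:ℝ) ≤ 2), show -(a - 1) = 1 - a by ring]
            nlinarith [Real.rpow_pos_of_pos (show (0:ℝ) < 2 by norm_num) (1 - a)]
        have hA : l ^ m * (1 + l) ^ (1 - κ) ≤ (1 + l) ^ (m + 1 - κ) := by
          have h13 : l ^ m ≤ (1 + l) ^ m :=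
            Real.rpow_le_rpow hl0 (by linarith) hm.le
          calc l ^ m * (1 + l) ^ (1 - κ)
              ≤ (1 + l) ^ m * (1 + l) ^ (1 - κ) :=
                mul_le_mul_of_nonneg_right h13 (Real.rpow_nonneg (by linarith) _)
            _ = (1 + l) ^ (m + 1 - κ) := by
                rw [← Real.rpow_add (by linarith)]; congr 1; ring
        have hB : T ^ (-(m + a)) * (T - l) ^ (a - 1)
            ≤ T ^ (-(m + a)) * ((1 + (2:ℝ) ^ (1 - a)) * T ^ (a - 1)) :=
          mul_le_mul_of_nonneg_left hbd (Real.rpow_nonneg hT.le _)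
        calc l ^ m * (1 + l) ^ (1 - κ) * (T ^ (-(m + a)) * (T - l) ^ (a - 1))
            ≤ (1 + l) ^ (m + 1 - κ) * (T ^ (-(m + a)) * ((1 + (2:ℝ) ^ (1 - a)) * T ^ (a - 1))) := by
              apply mul_le_mul hA hB _ (Real.rpow_nonneg (by linarith) _)
              exact mul_nonneg (Real.rpow_nonneg hT.le _) (Real.rpow_nonneg hTl.le _)
          _ = K1 * (1 + l) ^ (m + 1 - κ) := by rw [hK1]; ring)
    have hval1 : (∫ l in (0:ℝ)..(T/2), K1 * (1 + l) ^ (m + 1 - κ))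
        = K1 * (((1 + T/2) ^ (m + 2 - κ) - 1) / (m + 2 - κ)) := by
      rw [intervalIntegral.integral_const_mul]
      congr 1
      rw [intervalIntegral.integral_comp_add_left (fun x : ℝ => x ^ (m + 1 - κ)) 1,
        integral_rpow (Or.inl (by linarith)), add_zero,
        show m + 1 - κ + 1 = m + 2 - κ by ring, Real.one_rpow]
    have hp1bd : K1 * (((1 + T/2) ^ (m + 2 - κ) - 1) / (m + 2 - κ))
        ≤ c2 * (1 + T) ^ (1 - κ) := by
      have e1 : T ^ (a - 1) * T ^ (-(m + a)) = T ^ (-(m + 1)) := by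
        rw [← Real.rpow_add hT]; congr 1; ring
      have hp1 : (0:ℝ) < T ^ (m + 1) := Real.rpow_pos_of_pos hT _
      have hp2 : (0:ℝ) < (1 + T) ^ (m + 1) := Real.rpow_pos_of_pos h1T _
      have e2 : T ^ (-(m + 1)) ≤ (2:ℝ) ^ (m + 1) * (1 + T) ^ (-(m + 1)) := by
        have hpow : (1 + T) ^ (m + 1) ≤ (2:ℝ) ^ (m + 1) * T ^ (m + 1) := by
          have h := Real.rpow_le_rpow (by linarith : (0:ℝ) ≤ 1 + T)
            (by linarith : 1 + T ≤ 2 * T) (by linarith : (0:ℝ) ≤ m + 1)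
          rwa [Real.mul_rpow (by norm_num) hT.le] at h
        rw [Real.rpow_neg hT.le, Real.rpow_neg h1T.le, ← one_div, ← one_div,
          mul_one_div, div_le_div_iff₀ hp1 hp2, one_mul]
        nlinarith
      have e3 : ((1 + T/2) ^ (m + 2 - κ) - 1) / (m + 2 - κ)
          ≤ (1 + T) ^ (m + 2 - κ) / (m + 2 - κ) := by
        have h := Real.rpow_le_rpow (by linarith : (0:ℝ) ≤ 1 + T/2)
          (by linarith : 1 + T/2 ≤ 1 + T) hmκ.le
        exact (div_le_div_iff_of_pos_right hmκ).mpr (by linarith)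
      have e4 : (1 + T) ^ (m + 2 - κ) * (1 + T) ^ (-(m + 1)) = (1 + T) ^ (1 - κ) := by
        rw [← Real.rpow_add h1T]; congr 1; ring
      calc K1 * (((1 + T/2) ^ (m + 2 - κ) - 1) / (m + 2 - κ))
          ≤ K1 * ((1 + T) ^ (m + 2 - κ) / (m + 2 - κ)) :=
            mul_le_mul_of_nonneg_left e3 hK1pos.le
        _ = (1 + (2:ℝ) ^ (1 - a)) * T ^ (-(m + 1)) * ((1 + T) ^ (m + 2 - κ) / (m + 2 - κ)) := by
            rw [hK1, e1]
        _ ≤ (1 + (2:ℝ) ^ (1 - a)) * ((2:ℝ) ^ (m + 1) * (1 + T) ^ (-(m + 1)))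
              * ((1 + T) ^ (m + 2 - κ) / (m + 2 - κ)) := by
            apply mul_le_mul_of_nonneg_right (mul_le_mul_of_nonneg_left e2 hca.le)
            exact div_nonneg (Real.rpow_nonneg h1T.le _) hmκ.le
        _ = c2 * (1 + T) ^ (1 - κ) := by
            rw [hc2, ← e4]; ring
    -- piece 2
    set D2 : ℝ := (2:ℝ) ^ (κ - 1) * (1 + T) ^ (1 - κ) * T ^ (-a) with hD2
    have hD2pos : 0 < D2 := by
      have h1 := Real.rpow_pos_of_pos (show (0:ℝ) < 2 by norm_num) (κ - 1)
      have h2 := Real.rpow_pos_of_pos hT (-a)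
      positivity
    have hg2 : IntervalIntegrable (fun l => D2 * (T - l) ^ (a - 1)) volume (T/2) T :=
      (ii_sub_rpow (by linarith) T (T/2)).const_mul _
    have hb2 := intervalIntegral.integral_mono_on (by linarith : T/2 ≤ T) hi2 hg2
      (fun l hl => by
        have hl0 : (0:ℝ) ≤ l := by linarith [hl.1]
        rw [hfeq l hl.2]
        have hTl : (0:ℝ) ≤ T - l := by linarith [hl.2]
        have hA : l ^ m ≤ T ^ m := Real.rpow_le_rpow hl0 hl.2 hm.le
        have hB : (1 + l) ^ (1 - κ) ≤ (2:ℝ) ^ (κ - 1) * (1 + T) ^ (1 - κ) := by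
          have h1 : ((1 + T) / 2 : ℝ) ≤ 1 + l := by linarith [hl.1]
          have h2 : (1 + l) ^ (1 - κ) ≤ ((1 + T)/2) ^ (1 - κ) :=
            Real.rpow_le_rpow_of_nonpos (by linarith) h1 (by linarith)
          have h3 : ((1 + T)/2) ^ (1 - κ) = (1 + T) ^ (1 - κ) * (2:ℝ) ^ (κ - 1) := by
            rw [Real.div_rpow h1T.le (by norm_num), div_eq_mul_inv,
              ← Real.rpow_neg (by norm_num : (0:ℝ) ≤ 2), show -(1 - κ) = κ - 1 by ring]
          rw [h3] at h2; linarith [h2]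
        have e5 : T ^ m * T ^ (-(m + a)) = T ^ (-a) := by
          rw [← Real.rpow_add hT]; congr 1; ring
        calc l ^ m * (1 + l) ^ (1 - κ) * (T ^ (-(m + a)) * (T - l) ^ (a - 1))
            ≤ T ^ m * ((2:ℝ) ^ (κ - 1) * (1 + T) ^ (1 - κ))
                * (T ^ (-(m + a)) * (T - l) ^ (a - 1)) := by
              apply mul_le_mul_of_nonneg_right _
                (mul_nonneg (Real.rpow_nonneg hT.le _) (Real.rpow_nonneg hTl _))
              exact mul_le_mul hA hB (Real.rpow_nonneg (by linarith) _)
                (Real.rpow_nonneg hT.le _)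
          _ = D2 * (T - l) ^ (a - 1) := by rw [hD2, ← e5]; ring)
    have hval2 : (∫ l in (T/2)..T, D2 * (T - l) ^ (a - 1)) = D2 * ((T - T/2) ^ a / a) := by
      rw [intervalIntegral.integral_const_mul, int_sub_rpow ha]
    have hp2bd : D2 * ((T - T/2) ^ a / a) ≤ c1 * (1 + T) ^ (1 - κ) := by
      have h1 : (T - T/2) ^ a ≤ T ^ a :=
        Real.rpow_le_rpow (by linarith) (by linarith) ha.le
      have e6 : T ^ (-a) * T ^ a = 1 := by
        rw [← Real.rpow_add hT, neg_add_cancel, Real.rpow_zero]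
      calc D2 * ((T - T/2) ^ a / a)
          ≤ D2 * (T ^ a / a) :=
            mul_le_mul_of_nonneg_left ((div_le_div_iff_of_pos_right ha).mpr h1) hD2pos.le
        _ = (2:ℝ) ^ (κ - 1) * (1 + T) ^ (1 - κ) * (T ^ (-a) * T ^ a) / a := by
            rw [hD2]; ring
        _ = c1 * (1 + T) ^ (1 - κ) := by
            rw [e6, mul_one, hc1]; ring
    calc (∫ l in (0:ℝ)..(T/2), l ^ m * (1 + l) ^ (1 - κ) / (T ^ (m + a) * (T - l) ^ (1 - a)))
          + ∫ l in (T/2)..T, l ^ m * (1 + l) ^ (1 - κ) / (T ^ (m + a) * (T - l) ^ (1 - a))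
        ≤ K1 * (((1 + T/2) ^ (m + 2 - κ) - 1) / (m + 2 - κ)) + D2 * ((T - T/2) ^ a / a) :=
          add_le_add (hb1.trans_eq hval1) (hb2.trans_eq hval2)
      _ ≤ c2 * (1 + T) ^ (1 - κ) + c1 * (1 + T) ^ (1 - κ) := add_le_add hp1bd hp2bd
      _ = (c1 + c2) * (1 + T) ^ (1 - κ) := by ring

theorem stmt5 (a m κ : ℝ) (ha : 0 < a) (ham : a ≤ m) (hκ : 2 < κ) (hκ2 : κ < m + 2) :
    ∃ C : ℝ, 0 < C ∧ ∀ r t : ℝ, 0 < r → r ≤ t →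
      (∫ τ in (0:ℝ)..(t - r), ∫ l in (0:ℝ)..(t - r - τ),
          l ^ m * (1 + l) ^ (1 - κ) /
            ((t - r - τ) ^ (m + a) * (t - r - τ - l) ^ (1 - a))) ≤ C := by
  obtain ⟨C1, hC1, hbd⟩ := stmt5_inner a m κ ha ham hκ hκ2
  have hκ0 : (0:ℝ) < κ - 2 := by linarith
  refine ⟨C1 / (κ - 2), div_pos hC1 hκ0, ?_⟩
  intro r t hr hrt
  set S := t - r with hS
  have hS0 : (0:ℝ) ≤ S := by simp only [hS]; linarith
  by_cases hint : IntervalIntegrable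
      (fun τ => ∫ l in (0:ℝ)..(S - τ),
        l ^ m * (1 + l) ^ (1 - κ) / ((S - τ) ^ (m + a) * (S - τ - l) ^ (1 - a))) volume 0 S
  swap
  · rw [intervalIntegral.integral_undef hint]
    exact (div_pos hC1 hκ0).le
  have hgc : ContinuousOn (fun τ : ℝ => C1 * (1 + (S - τ)) ^ (1 - κ)) (uIcc 0 S) := by
    apply ContinuousOn.mul continuousOn_const
    apply ContinuousOn.rpow_const (by fun_prop)
    intro x hx
    rw [uIcc_of_le hS0] at hx
    exact Or.inl (ne_of_gt (by nlinarith [hx.2]))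
  have hg : IntervalIntegrable (fun τ : ℝ => C1 * (1 + (S - τ)) ^ (1 - κ)) volume 0 S :=
    hgc.intervalIntegrable
  have hmono := intervalIntegral.integral_mono_on hS0 hint hg
    (fun τ hτ => hbd (S - τ) (by linarith [hτ.2]))
  have hval : (∫ τ in (0:ℝ)..S, C1 * (1 + (S - τ)) ^ (1 - κ))
      = C1 * (((1 + S) ^ (2 - κ) - 1) / (2 - κ)) := by
    rw [intervalIntegral.integral_const_mul]
    congr 1
    have heq : ∀ τ : ℝ, (1 + (S - τ) : ℝ) = (1 + S) - τ := fun τ => by ring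
    simp only [heq]
    rw [intervalIntegral.integral_comp_sub_left (fun x : ℝ => x ^ (1 - κ)) (1 + S)]
    rw [show (1 + S) - S = 1 by ring, sub_zero,
      integral_rpow (Or.inr ⟨by intro h; linarith [h], ?_⟩),
      Real.one_rpow, show 1 - κ + 1 = 2 - κ by ring]
    rw [uIcc_of_le (by linarith : (1:ℝ) ≤ 1 + S)]
    rintro ⟨h1, -⟩
    linarith
  have hfin : C1 * (((1 + S) ^ (2 - κ) - 1) / (2 - κ)) ≤ C1 / (κ - 2) := by
    have hx : (0:ℝ) ≤ (1 + S) ^ (2 - κ) := Real.rpow_nonneg (by linarith) _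
    have e : ((1 + S) ^ (2 - κ) - 1) / (2 - κ) = (1 - (1 + S) ^ (2 - κ)) / (κ - 2) := by
      rw [div_eq_div_iff (by linarith : (2 - κ : ℝ) ≠ 0) (by linarith : (κ - 2 : ℝ) ≠ 0)]
      ring
    rw [e]
    calc C1 * ((1 - (1 + S) ^ (2 - κ)) / (κ - 2))
        ≤ C1 * (1 / (κ - 2)) :=
          mul_le_mul_of_nonneg_left ((div_le_div_iff_of_pos_right hκ0).mpr (by linarith)) hC1.le
      _ = C1 / (κ - 2) := by rw [mul_one_div]
  exact hmono.trans (hval.trans_le hfin)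
end

section
/- Let m ≥ a > 0 and p > 1 with 2 - mp + m > 0. Then there is a constant C = C(a, m, p) such that for all t ≥ r > 0: ∫₀^{t-r} ∫₀^{t-r-τ} λ^{1-mp+2m} / ((t-r-τ)^{m+a} · (t-r-τ-λ)^{1-a}) dλ dτ ≤ C · (1 + t - r)^{2-mp+m}. -/
open MeasureTheory

/-- pointwise algebra identity for the inner integrand -/
lemma stmt6_aux_pt (a m α s l x : ℝ) (hs : 0 ≤ s) (hx : 0 ≤ x) :
    l ^ α / (s ^ (m + a) * x ^ (1 - a)) =
      s ^ (-(m + a)) * (l ^ α * x ^ (a - 1)) := by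
  rw [Real.rpow_neg hs, show a - 1 = -(1 - a) by ring, Real.rpow_neg hx,
    div_eq_mul_inv, mul_inv]
  ring

/-- scaled beta identity, with no integrability hypotheses -/
lemma stmt6_aux_beta (a α s : ℝ) (hs : 0 < s) :
    (∫ l in (0:ℝ)..s, l ^ α * (s - l) ^ (a - 1)) =
      s ^ (α + a) * ∫ x in (0:ℝ)..1, x ^ α * (1 - x) ^ (a - 1) := by
  have h := intervalIntegral.integral_comp_mul_left
      (fun l => l ^ α * (s - l) ^ (a - 1)) (ne_of_gt hs) (a := 0) (b := 1)
  simp only [mul_zero, mul_one] at h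
  have h2 : (∫ x in (0:ℝ)..1, (s * x) ^ α * (s - s * x) ^ (a - 1)) =
      ∫ x in (0:ℝ)..1, s ^ (α + a - 1) * (x ^ α * (1 - x) ^ (a - 1)) := by
    refine intervalIntegral.integral_congr_ae ?_
    filter_upwards with x hx
    rw [Set.uIoc_of_le (by norm_num : (0:ℝ) ≤ 1)] at hx
    have hx0 : 0 ≤ x := le_of_lt hx.1
    have hx1 : 0 ≤ 1 - x := by linarith [hx.2]
    have : s - s * x = s * (1 - x) := by ring
    rw [this, Real.mul_rpow hs.le hx0, Real.mul_rpow hs.le hx1,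
      show α + a - 1 = α + (a - 1) by ring, Real.rpow_add hs]
    ring
  rw [h, intervalIntegral.integral_const_mul] at h2
  have hs' : s ≠ 0 := ne_of_gt hs
  rw [smul_eq_mul] at h2
  have := congrArg (fun y => s * y) h2
  simp only [← mul_assoc, mul_inv_cancel₀ hs', one_mul] at this
  have hss : s * s ^ (α + a - 1) = s ^ (α + a) := by
    have h3 := Real.rpow_add hs 1 (α + a - 1)
    rw [Real.rpow_one] at h3
    rw [← h3]
    congr 1
    ring
  rw [this, hss]

theorem stmt6 (a m p : ℝ) (ha : 0 < a) (ham : a ≤ m) (hp : 1 < p)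
    (hcon : 0 < 2 - m * p + m) :
    ∃ C : ℝ, 0 < C ∧ ∀ r t : ℝ, 0 < r → r ≤ t →
      (∫ τ in (0:ℝ)..(t - r), ∫ l in (0:ℝ)..(t - r - τ),
          l ^ (1 - m * p + 2 * m) /
            ((t - r - τ) ^ (m + a) * (t - r - τ - l) ^ (1 - a))) ≤
        C * (1 + t - r) ^ (2 - m * p + m) := by
  set α : ℝ := 1 - m * p + 2 * m with hα
  set β : ℝ := 2 - m * p + m with hβ
  set B : ℝ := ∫ x in (0:ℝ)..1, x ^ α * (1 - x) ^ (a - 1) with hBdef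
  have hB0 : 0 ≤ B := by
    apply intervalIntegral.integral_nonneg (by norm_num)
    intro x hx
    exact mul_nonneg (Real.rpow_nonneg hx.1 _) (Real.rpow_nonneg (by linarith [hx.2]) _)
  have hβ0' : 0 < β := hcon
  refine ⟨B / β + 1, by have := div_nonneg hB0 hβ0'.le; linarith, fun r t hr hrt => ?_⟩
  set T : ℝ := t - r with hT
  have hT0 : 0 ≤ T := by simp [hT]; linarith
  -- inner integral computation for 0 < s
  have hinner : ∀ s : ℝ, 0 < s →
      (∫ l in (0:ℝ)..s, l ^ α / (s ^ (m + a) * (s - l) ^ (1 - a))) =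
        B * s ^ (α - m) := by
    intro s hs
    have h1 : (∫ l in (0:ℝ)..s, l ^ α / (s ^ (m + a) * (s - l) ^ (1 - a))) =
        ∫ l in (0:ℝ)..s, s ^ (-(m + a)) * (l ^ α * (s - l) ^ (a - 1)) := by
      refine intervalIntegral.integral_congr_ae ?_
      filter_upwards with l hl
      rw [Set.uIoc_of_le hs.le] at hl
      exact stmt6_aux_pt a m α s l (s - l) hs.le (by linarith [hl.2])
    rw [h1, intervalIntegral.integral_const_mul, stmt6_aux_beta a α s hs,
      ← mul_assoc, ← Real.rpow_add hs]
    rw [show -(m + a) + (α + a) = α - m by ring]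
    ring
  -- rewrite the outer integral
  have houter : (∫ τ in (0:ℝ)..T, ∫ l in (0:ℝ)..(T - τ),
        l ^ α / ((T - τ) ^ (m + a) * (T - τ - l) ^ (1 - a))) =
      B * (T ^ β / β) := by
    have hae : ∀ᵐ τ ∂(volume : Measure ℝ), τ ≠ T := by
      have : (volume : Measure ℝ) {T} = 0 := measure_singleton T
      rw [ae_iff]
      simp
    have h1 : (∫ τ in (0:ℝ)..T, ∫ l in (0:ℝ)..(T - τ),
          l ^ α / ((T - τ) ^ (m + a) * (T - τ - l) ^ (1 - a))) =
        ∫ τ in (0:ℝ)..T, B * (T - τ) ^ (α - m) := by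
      refine intervalIntegral.integral_congr_ae ?_
      filter_upwards [hae] with τ hτ hmem
      rw [Set.uIoc_of_le hT0] at hmem
      have hs : 0 < T - τ := lt_of_le_of_ne (by linarith [hmem.2]) (by
        intro h; exact hτ (by linarith))
      exact hinner (T - τ) hs
    rw [h1, intervalIntegral.integral_const_mul]
    have h2 : (∫ τ in (0:ℝ)..T, (T - τ) ^ (α - m)) = ∫ u in (0:ℝ)..T, u ^ (α - m) := by
      have := intervalIntegral.integral_comp_sub_left
        (fun u => u ^ (α - m)) T (a := 0) (b := T)
      simpa using this
    have hαm : -1 < α - m := by rw [hα]; linarith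
    rw [h2, integral_rpow (Or.inl hαm)]
    have hz : (0:ℝ) ^ (α - m + 1) = 0 := by
      apply Real.zero_rpow
      rw [hα]; intro h; nlinarith
    rw [hz]
    have hβeq : α - m + 1 = β := by rw [hα, hβ]; ring
    rw [hβeq]
    ring
  have hTR : 1 + t - r = 1 + T := by rw [hT]; ring
  rw [houter, hTR]
  -- final estimate
  have hβ0 : 0 < β := hcon
  have h1T : T ^ β ≤ (1 + T) ^ β :=
    Real.rpow_le_rpow hT0 (by linarith) hβ0.le
  have hpos : 0 < (1 + T) ^ β := Real.rpow_pos_of_pos (by linarith) β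
  calc B * (T ^ β / β) = T ^ β / β * B := by ring
    _ ≤ (1 + T) ^ β / β * B := by gcongr
    _ = B / β * (1 + T) ^ β := by ring
    _ ≤ (B / β + 1) * (1 + T) ^ β := by nlinarith
end

section
/- Let a > 0 and μ ≤ a. Suppose r, t > 0, max(t-2r, 0) ≤ τ ≤ t, and set λ± = t - τ ± r. Then |λ_±|^a · (1 + |λ_±| + τ)^{-μ} ≤ C r^a (1 + t + r)^{-μ} for a constant C depending only on a and μ (independent of r, t, τ), for both choices of sign. -/
open Real

private lemma aux8 (a μ : ℝ) (ha : 0 < a) (hμ : μ ≤ a) (L r t τ : ℝ)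
    (hL0 : 0 ≤ L) (hLr : L ≤ r) (hr : 0 < r) (hτ : 0 ≤ τ)
    (hsum : 1 + L + τ ≤ 1 + t + r)
    (hcase : 1 + t + r ≤ 4 * (1 + L + τ) ∨ (1 ≤ r ∧ 1 + t + r ≤ 4 * r)) :
    L ^ a * (1 + L + τ) ^ (-μ) ≤ (4:ℝ) ^ a * r ^ a * (1 + t + r) ^ (-μ) := by
  have hP : (0:ℝ) < 1 + L + τ := by linarith
  have hQ : (0:ℝ) < 1 + t + r := by linarith
  have h4a : (1:ℝ) ≤ (4:ℝ) ^ a := by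
    have := Real.rpow_le_rpow_of_exponent_le (by norm_num : (1:ℝ) ≤ 4) ha.le
    simpa using this
  have hLa : L ^ a ≤ r ^ a := Real.rpow_le_rpow hL0 hLr ha.le
  rcases le_or_gt μ 0 with hμ0 | hμ0
  · -- μ ≤ 0 : exponent -μ ≥ 0, monotone
    have h1 : (1 + L + τ) ^ (-μ) ≤ (1 + t + r) ^ (-μ) :=
      Real.rpow_le_rpow hP.le hsum (by linarith)
    have h2 : L ^ a * (1 + L + τ) ^ (-μ) ≤ r ^ a * (1 + t + r) ^ (-μ) := by
      apply mul_le_mul hLa h1 (Real.rpow_nonneg hP.le _) (Real.rpow_nonneg (by positivity) _)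
    calc L ^ a * (1 + L + τ) ^ (-μ) ≤ r ^ a * (1 + t + r) ^ (-μ) := h2
      _ ≤ (4:ℝ) ^ a * r ^ a * (1 + t + r) ^ (-μ) := by
          have : (0:ℝ) ≤ r ^ a * (1 + t + r) ^ (-μ) := by positivity
          nlinarith
  · -- μ > 0
    have h4μ : (4:ℝ) ^ μ ≤ (4:ℝ) ^ a :=
      Real.rpow_le_rpow_of_exponent_le (by norm_num) hμ
    rcases hcase with hA | ⟨hr1, hB⟩
    · -- 1 + t + r ≤ 4 (1 + L + τ)
      have h1 : (1 + t + r) ^ (-μ) ≥ (4 * (1 + L + τ)) ^ (-μ) :=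
        Real.rpow_le_rpow_of_nonpos hQ hA (by linarith)
      have h2 : (4 * (1 + L + τ)) ^ (-μ) = (4:ℝ) ^ (-μ) * (1 + L + τ) ^ (-μ) :=
        Real.mul_rpow (by norm_num) hP.le
      -- so (1+L+τ)^(-μ) ≤ 4^μ * (1+t+r)^(-μ)
      have h3 : (1 + L + τ) ^ (-μ) ≤ (4:ℝ) ^ μ * (1 + t + r) ^ (-μ) := by
        have h4 : (4:ℝ) ^ μ * ((4:ℝ) ^ (-μ) * (1 + L + τ) ^ (-μ)) = (1 + L + τ) ^ (-μ) := by
          rw [← mul_assoc, ← Real.rpow_add (by norm_num : (0:ℝ) < 4)]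
          simp
        calc (1 + L + τ) ^ (-μ) = (4:ℝ) ^ μ * ((4:ℝ) ^ (-μ) * (1 + L + τ) ^ (-μ)) := h4.symm
          _ = (4:ℝ) ^ μ * (4 * (1 + L + τ)) ^ (-μ) := by rw [h2]
          _ ≤ (4:ℝ) ^ μ * (1 + t + r) ^ (-μ) := by
              apply mul_le_mul_of_nonneg_left h1 (Real.rpow_nonneg (by norm_num) _)
      calc L ^ a * (1 + L + τ) ^ (-μ)
          ≤ r ^ a * ((4:ℝ) ^ μ * (1 + t + r) ^ (-μ)) := by
            apply mul_le_mul hLa h3 (Real.rpow_nonneg hP.le _) (Real.rpow_nonneg hr.le _)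
        _ = (4:ℝ) ^ μ * r ^ a * (1 + t + r) ^ (-μ) := by ring
        _ ≤ (4:ℝ) ^ a * r ^ a * (1 + t + r) ^ (-μ) := by
            have h6 : (0:ℝ) ≤ (1 + t + r) ^ (-μ) := Real.rpow_nonneg hQ.le _
            have := mul_le_mul_of_nonneg_right
              (mul_le_mul_of_nonneg_right h4μ (Real.rpow_nonneg hr.le a)) h6
            linarith
    · -- 1 ≤ r, 1 + t + r ≤ 4r
      rcases eq_or_lt_of_le hL0 with hL | hL
      · rw [← hL, Real.zero_rpow ha.ne', zero_mul]
        positivity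
      -- L > 0
      have key1 : L ^ a * (1 + L + τ) ^ (-μ) ≤ r ^ (a - μ) := by
        have e1 : L ^ a = L ^ μ * L ^ (a - μ) := by
          rw [← Real.rpow_add hL]; ring_nf
        have e2 : L ^ μ ≤ (1 + L + τ) ^ μ :=
          Real.rpow_le_rpow hL0 (by linarith) hμ0.le
        have e3 : L ^ (a - μ) ≤ r ^ (a - μ) :=
          Real.rpow_le_rpow hL0 hLr (by linarith)
        have e4 : (1 + L + τ) ^ μ * (1 + L + τ) ^ (-μ) = 1 := by
          rw [← Real.rpow_add hP]; simp
        calc L ^ a * (1 + L + τ) ^ (-μ)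
            = L ^ μ * L ^ (a - μ) * (1 + L + τ) ^ (-μ) := by rw [e1]
          _ ≤ (1 + L + τ) ^ μ * r ^ (a - μ) * (1 + L + τ) ^ (-μ) := by
              apply mul_le_mul_of_nonneg_right _ (Real.rpow_nonneg hP.le _)
              exact mul_le_mul e2 e3 (Real.rpow_nonneg hL0 _) (Real.rpow_nonneg hP.le _)
          _ = (1 + L + τ) ^ μ * (1 + L + τ) ^ (-μ) * r ^ (a - μ) := by ring
          _ = r ^ (a - μ) := by rw [e4, one_mul]
      have key2 : r ^ (a - μ) ≤ (4:ℝ) ^ a * r ^ a * (1 + t + r) ^ (-μ) := by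
        have f1 : (1 + t + r) ^ (-μ) ≥ (4 * r) ^ (-μ) :=
          Real.rpow_le_rpow_of_nonpos hQ hB (by linarith)
        have f2 : (4 * r) ^ (-μ) = (4:ℝ) ^ (-μ) * r ^ (-μ) :=
          Real.mul_rpow (by norm_num) hr.le
        have f3 : (4:ℝ) ^ a * r ^ a * ((4:ℝ) ^ (-μ) * r ^ (-μ)) = (4:ℝ) ^ (a - μ) * r ^ (a - μ) := by
          rw [show (4:ℝ) ^ a * r ^ a * ((4:ℝ) ^ (-μ) * r ^ (-μ))
              = ((4:ℝ) ^ a * (4:ℝ) ^ (-μ)) * (r ^ a * r ^ (-μ)) from by ring,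
            ← Real.rpow_add (by norm_num : (0:ℝ) < 4), ← Real.rpow_add hr]
          ring_nf
        have f4 : (1:ℝ) ≤ (4:ℝ) ^ (a - μ) := by
          have := Real.rpow_le_rpow_of_exponent_le (by norm_num : (1:ℝ) ≤ 4) (by linarith : (0:ℝ) ≤ a - μ)
          simpa using this
        have f5 : r ^ (a - μ) ≤ (4:ℝ) ^ (a - μ) * r ^ (a - μ) := by
          nlinarith [Real.rpow_nonneg hr.le (a - μ)]
        calc r ^ (a - μ) ≤ (4:ℝ) ^ (a - μ) * r ^ (a - μ) := f5
          _ = (4:ℝ) ^ a * r ^ a * ((4 * r) ^ (-μ)) := by rw [f2, f3]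
          _ ≤ (4:ℝ) ^ a * r ^ a * (1 + t + r) ^ (-μ) := by
              apply mul_le_mul_of_nonneg_left f1
              positivity
      linarith

theorem stmt8 (a μ : ℝ) (ha : 0 < a) (hμ : μ ≤ a) :
    ∃ C : ℝ, 0 < C ∧ ∀ r t τ : ℝ, 0 < r → 0 < t → max (t - 2 * r) 0 ≤ τ → τ ≤ t →
      |t - τ + r| ^ a * (1 + |t - τ + r| + τ) ^ (-μ) ≤ C * r ^ a * (1 + t + r) ^ (-μ) ∧
      |t - τ - r| ^ a * (1 + |t - τ - r| + τ) ^ (-μ) ≤ C * r ^ a * (1 + t + r) ^ (-μ) := by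
  refine ⟨(4:ℝ) ^ a, Real.rpow_pos_of_pos (by norm_num) a, fun r t τ hr ht hτ1 hτ2 => ?_⟩
  have hτ0 : 0 ≤ τ := le_trans (le_max_right _ _) hτ1
  have ht2r : t - 2 * r ≤ τ := le_trans (le_max_left _ _) hτ1
  have httr : 0 ≤ t - τ := by linarith
  constructor
  · -- plus sign
    have habs : |t - τ + r| = t - τ + r := abs_of_pos (by linarith)
    have hmid : 1 + |t - τ + r| + τ = 1 + t + r := by rw [habs]; ring
    rw [habs, show (1 + (t - τ + r) + τ) = 1 + t + r from by ring]
    have h1 : (t - τ + r) ^ a ≤ (4:ℝ) ^ a * r ^ a := by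
      have : t - τ + r ≤ 4 * r := by linarith
      calc (t - τ + r) ^ a ≤ (4 * r) ^ a := Real.rpow_le_rpow (by linarith) this ha.le
        _ = (4:ℝ) ^ a * r ^ a := Real.mul_rpow (by norm_num) hr.le
    apply mul_le_mul_of_nonneg_right h1 (Real.rpow_nonneg (by linarith) _)
  · -- minus sign
    have hL0 : (0:ℝ) ≤ |t - τ - r| := abs_nonneg _
    have hLr : |t - τ - r| ≤ r := abs_le.mpr ⟨by linarith, by linarith⟩
    have hle : t - τ - r ≤ |t - τ - r| := le_abs_self _
    have hsum : 1 + |t - τ - r| + τ ≤ 1 + t + r := by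
      rcases abs_cases (t - τ - r) with ⟨h, _⟩ | ⟨h, _⟩ <;> rw [h] <;> linarith
    have hcase : 1 + t + r ≤ 4 * (1 + |t - τ - r| + τ) ∨ (1 ≤ r ∧ 1 + t + r ≤ 4 * r) := by
      rcases le_or_gt r 1 with h1 | h1
      · left; linarith
      · rcases le_or_gt t (2 * r) with h2 | h2
        · right; exact ⟨h1.le, by linarith⟩
        · left; linarith
    exact aux8 a μ ha hμ _ r t τ hL0 hLr hr hτ0 hsum hcase
end
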